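/- arXiv:2112.04183 — 4 statements merged into one kernel-verified Lean document; each statement's English description precedes it below -/
import Mathlib

section
/- Every strong component of a twin-distance-hereditary digraph is a directed co-graph. -/
/-- Arc relation of the induced subdigraph on a vertex set `S`. -/
def restrict (A : ℕ → ℕ → Prop) (S : Finset ℕ) : ℕ → ℕ → Prop :=
  fun x y => A x y ∧ x ∈ S ∧ y ∈ S

/-- `walkLen A n u v`: there is a directed walk of length `n` from `u` to `v`. -/
def walkLen (A : ℕ → ℕ → Prop) : ℕ → ℕ → ℕ → Prop
  | 0, u, v => u = v
  | n + 1, u, v => ∃ w, A u w ∧ walkLen A n w v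

/-- `v` is reachable from `u` by a directed walk. -/
def Reach (A : ℕ → ℕ → Prop) (u v : ℕ) : Prop :=
  ∃ n, walkLen A n u v

/-- Directed distance: length of a shortest directed walk (= shortest directed path). -/
noncomputable def ddist (A : ℕ → ℕ → Prop) (u v : ℕ) : ℕ :=
  sInf {n | walkLen A n u v}

/-- `x` and `y` are directed twins: `N⁻(x)\{y} = N⁻(y)\{x}` and `N⁺(x)\{y} = N⁺(y)\{x}`. -/
def DTwins (A : ℕ → ℕ → Prop) (x y : ℕ) : Prop :=
  x ≠ y ∧
    {w | A w x} \ {y} = {w | A w y} \ {x} ∧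
    {w | A x w} \ {y} = {w | A y w} \ {x}

/-- The arc relation obtained by adding a new vertex `u` as a directed twin of `v`;
`auv`, `avu` determine which of the arcs `(u,v)`, `(v,u)` are present (any of the
four adjacency patterns between the twins). -/
def twinArc (A : ℕ → ℕ → Prop) (v u : ℕ) (auv avu : Prop) : ℕ → ℕ → Prop :=
  fun x y => A x y ∨ (x = u ∧ y = v ∧ auv) ∨ (x = v ∧ y = u ∧ avu) ∨
    (x = u ∧ A v y) ∨ (y = u ∧ A x v)

/-- Directed co-graphs: single vertices, disjoint union, series and order composition. -/
inductive DCo : Finset ℕ → (ℕ → ℕ → Prop) → Prop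
  | single (v : ℕ) : DCo {v} (fun _ _ => False)
  | union {V₁ V₂ : Finset ℕ} {A₁ A₂ : ℕ → ℕ → Prop} :
      Disjoint V₁ V₂ → DCo V₁ A₁ → DCo V₂ A₂ →
      DCo (V₁ ∪ V₂) (fun x y => A₁ x y ∨ A₂ x y)
  | series {V₁ V₂ : Finset ℕ} {A₁ A₂ : ℕ → ℕ → Prop} :
      Disjoint V₁ V₂ → DCo V₁ A₁ → DCo V₂ A₂ →
      DCo (V₁ ∪ V₂)
        (fun x y => A₁ x y ∨ A₂ x y ∨ (x ∈ V₁ ∧ y ∈ V₂) ∨ (x ∈ V₂ ∧ y ∈ V₁))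
  | order {V₁ V₂ : Finset ℕ} {A₁ A₂ : ℕ → ℕ → Prop} :
      Disjoint V₁ V₂ → DCo V₁ A₁ → DCo V₂ A₂ →
      DCo (V₁ ∪ V₂) (fun x y => A₁ x y ∨ A₂ x y ∨ (x ∈ V₁ ∧ y ∈ V₂))

/-- Extended directed co-graphs: additionally closed under directed union. -/
inductive ExtDCo : Finset ℕ → (ℕ → ℕ → Prop) → Prop
  | single (v : ℕ) : ExtDCo {v} (fun _ _ => False)
  | union {V₁ V₂ : Finset ℕ} {A₁ A₂ : ℕ → ℕ → Prop} :
      Disjoint V₁ V₂ → ExtDCo V₁ A₁ → ExtDCo V₂ A₂ →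
      ExtDCo (V₁ ∪ V₂) (fun x y => A₁ x y ∨ A₂ x y)
  | series {V₁ V₂ : Finset ℕ} {A₁ A₂ : ℕ → ℕ → Prop} :
      Disjoint V₁ V₂ → ExtDCo V₁ A₁ → ExtDCo V₂ A₂ →
      ExtDCo (V₁ ∪ V₂)
        (fun x y => A₁ x y ∨ A₂ x y ∨ (x ∈ V₁ ∧ y ∈ V₂) ∨ (x ∈ V₂ ∧ y ∈ V₁))
  | order {V₁ V₂ : Finset ℕ} {A₁ A₂ : ℕ → ℕ → Prop} :
      Disjoint V₁ V₂ → ExtDCo V₁ A₁ → ExtDCo V₂ A₂ →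
      ExtDCo (V₁ ∪ V₂) (fun x y => A₁ x y ∨ A₂ x y ∨ (x ∈ V₁ ∧ y ∈ V₂))
  | dUnion {V₁ V₂ : Finset ℕ} {A₁ A₂ : ℕ → ℕ → Prop} (R : ℕ → ℕ → Prop) :
      Disjoint V₁ V₂ → ExtDCo V₁ A₁ → ExtDCo V₂ A₂ →
      ExtDCo (V₁ ∪ V₂) (fun x y => A₁ x y ∨ A₂ x y ∨ (x ∈ V₁ ∧ y ∈ V₂ ∧ R x y))

/-- Digraphs constructible from single vertices by disjoint union and adding directed twins. -/
inductive TwinBuilt : Finset ℕ → (ℕ → ℕ → Prop) → Prop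
  | single (v : ℕ) : TwinBuilt {v} (fun _ _ => False)
  | union {V₁ V₂ : Finset ℕ} {A₁ A₂ : ℕ → ℕ → Prop} :
      Disjoint V₁ V₂ → TwinBuilt V₁ A₁ → TwinBuilt V₂ A₂ →
      TwinBuilt (V₁ ∪ V₂) (fun x y => A₁ x y ∨ A₂ x y)
  | twin {V : Finset ℕ} {A : ℕ → ℕ → Prop} (v u : ℕ) (auv avu : Prop) :
      v ∈ V → u ∉ V → TwinBuilt V A →
      TwinBuilt (insert u V) (twinArc A v u auv avu)

/-- Twin-distance-hereditary digraphs: built from a single vertex by disjoint union,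
adding directed twins, and adding pendant plus / pendant minus vertices. -/
inductive TwinDH : Finset ℕ → (ℕ → ℕ → Prop) → Prop
  | single (v : ℕ) : TwinDH {v} (fun _ _ => False)
  | union {V₁ V₂ : Finset ℕ} {A₁ A₂ : ℕ → ℕ → Prop} :
      Disjoint V₁ V₂ → TwinDH V₁ A₁ → TwinDH V₂ A₂ →
      TwinDH (V₁ ∪ V₂) (fun x y => A₁ x y ∨ A₂ x y)
  | twin {V : Finset ℕ} {A : ℕ → ℕ → Prop} (v u : ℕ) (auv avu : Prop) :
      v ∈ V → u ∉ V → TwinDH V A →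
      TwinDH (insert u V) (twinArc A v u auv avu)
  | pendPlus {V : Finset ℕ} {A : ℕ → ℕ → Prop} (a u : ℕ) :
      a ∈ V → u ∉ V → TwinDH V A →
      TwinDH (insert u V) (fun x y => A x y ∨ (x = u ∧ y = a))
  | pendMinus {V : Finset ℕ} {A : ℕ → ℕ → Prop} (a u : ℕ) :
      a ∈ V → u ∉ V → TwinDH V A →
      TwinDH (insert u V) (fun x y => A x y ∨ (x = a ∧ y = u))

/-- Undirected distance-hereditary graphs, via the recursive characterization:
built from a single vertex by pendant vertices, false twins and true twins. -/
inductive UDH : Finset ℕ → (ℕ → ℕ → Prop) → Prop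
  | single (v : ℕ) : UDH {v} (fun _ _ => False)
  | pendant {V : Finset ℕ} {E : ℕ → ℕ → Prop} (a u : ℕ) :
      a ∈ V → u ∉ V → UDH V E →
      UDH (insert u V) (fun x y => E x y ∨ (x = u ∧ y = a) ∨ (x = a ∧ y = u))
  | falseTwin {V : Finset ℕ} {E : ℕ → ℕ → Prop} (v u : ℕ) :
      v ∈ V → u ∉ V → UDH V E →
      UDH (insert u V) (fun x y => E x y ∨ (x = u ∧ E v y) ∨ (y = u ∧ E x v))
  | trueTwin {V : Finset ℕ} {E : ℕ → ℕ → Prop} (v u : ℕ) :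
      v ∈ V → u ∉ V → UDH V E →
      UDH (insert u V)
        (fun x y => E x y ∨ (x = u ∧ E v y) ∨ (y = u ∧ E x v) ∨
          (x = u ∧ y = v) ∨ (x = v ∧ y = u))

/-- The induced subdigraph on `C` is strongly connected. -/
def StronglyConn (A : ℕ → ℕ → Prop) (C : Finset ℕ) : Prop :=
  ∀ u ∈ C, ∀ v ∈ C, Reach (restrict A C) u v

/-- `C` is a strong component of the digraph with vertex set `V` and arcs `A`. -/
def IsStrongComponent (A : ℕ → ℕ → Prop) (V C : Finset ℕ) : Prop :=
  C.Nonempty ∧ C ⊆ V ∧ StronglyConn A C ∧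
    ∀ D, C ⊆ D → D ⊆ V → StronglyConn A D → D = C

/-- The induced subdigraph on `S` is weakly connected. -/
def WeaklyConn (A : ℕ → ℕ → Prop) (S : Finset ℕ) : Prop :=
  S.Nonempty ∧ ∀ u ∈ S, ∀ v ∈ S,
    Relation.ReflTransGen (fun x y => restrict A S x y ∨ restrict A S y x) u v

/-- The induced subdigraph on `V` is acyclic. -/
def AcyclicOn (A : ℕ → ℕ → Prop) (V : Finset ℕ) : Prop :=
  ∀ v ∈ V, ∀ n, 0 < n → ¬ walkLen (restrict A V) n v v

/-- `CRle A V r`: the cycle rank of the digraph `(V, A)` is at most `r`.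
This is the standard recursive definition: acyclic digraphs have rank 0, digraphs
decompose into their strong components, and deleting a vertex decreases rank by
at most one. -/
inductive CRle (A : ℕ → ℕ → Prop) : Finset ℕ → ℕ → Prop
  | base {V : Finset ℕ} {r : ℕ} : AcyclicOn A V → CRle A V r
  | scc {V : Finset ℕ} {r : ℕ} :
      (∀ C, IsStrongComponent A V C → CRle A C r) → CRle A V r
  | step {V : Finset ℕ} {r : ℕ} (v : ℕ) :
      v ∈ V → CRle A (V.erase v) r → CRle A V (r + 1)

/-- The cycle rank of the digraph `(V, A)`. -/
noncomputable def cycleRank (A : ℕ → ℕ → Prop) (V : Finset ℕ) : ℕ :=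
  sInf {r | CRle A V r}

/-- `CW k V A f`: the `k`-labeled digraph with vertices `V`, arcs `A` and labeling `f`
is constructible by a directed clique-width `k`-expression. -/
inductive CW (k : ℕ) : Finset ℕ → (ℕ → ℕ → Prop) → (ℕ → Fin k) → Prop
  | vertex (v : ℕ) (a : Fin k) : CW k {v} (fun _ _ => False) (fun _ => a)
  | union {V₁ V₂ : Finset ℕ} {A₁ A₂ : ℕ → ℕ → Prop} {f₁ f₂ : ℕ → Fin k} :
      Disjoint V₁ V₂ → CW k V₁ A₁ f₁ → CW k V₂ A₂ f₂ →
      CW k (V₁ ∪ V₂) (fun x y => A₁ x y ∨ A₂ x y)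
        (fun x => if x ∈ V₁ then f₁ x else f₂ x)
  | addArcs {V : Finset ℕ} {A : ℕ → ℕ → Prop} {f : ℕ → Fin k} (a b : Fin k) :
      a ≠ b → CW k V A f →
      CW k V (fun x y => A x y ∨ (x ∈ V ∧ y ∈ V ∧ f x = a ∧ f y = b)) f
  | relabel {V : Finset ℕ} {A : ℕ → ℕ → Prop} {f : ℕ → Fin k} (a b : Fin k) :
      CW k V A f →
      CW k V A (fun x => if f x = a then b else f x)

section Helpers

lemma walkLen_mono {R R' : ℕ → ℕ → Prop} (h : ∀ x y, R x y → R' x y) :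
    ∀ n u v, walkLen R n u v → walkLen R' n u v := by
  intro n
  induction n with
  | zero => intro u v h0; exact h0
  | succ n ih =>
    rintro u v ⟨w, hw, hwalk⟩
    exact ⟨w, h _ _ hw, ih _ _ hwalk⟩

lemma reach_mono {R R' : ℕ → ℕ → Prop} (h : ∀ x y, R x y → R' x y) {u v : ℕ}
    (hr : Reach R u v) : Reach R' u v :=
  hr.imp fun n => walkLen_mono h n u v

lemma reach_trans {R : ℕ → ℕ → Prop} {u v w : ℕ}
    (h1 : Reach R u v) (h2 : Reach R v w) : Reach R u w := by
  obtain ⟨m, h1⟩ := h1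
  obtain ⟨n, h2⟩ := h2
  refine ⟨m + n, ?_⟩
  induction m generalizing u with
  | zero =>
    rw [Nat.zero_add]
    exact (show u = v from h1) ▸ h2
  | succ m ih =>
    obtain ⟨z, hz, hwalk⟩ := h1
    rw [show m + 1 + n = (m + n) + 1 from by omega]
    exact ⟨z, hz, ih hwalk⟩

lemma walk_preserve {R : ℕ → ℕ → Prop} {S : Finset ℕ}
    (h : ∀ x y, R x y → x ∈ S → y ∈ S) :
    ∀ n u v, walkLen R n u v → u ∈ S → v ∈ S := by
  intro n
  induction n with
  | zero => intro u v h0 hu; exact (show u = v from h0) ▸ hu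
  | succ n ih =>
    rintro u v ⟨w, hw, hwalk⟩ hu
    exact ih w v hwalk (h u w hw hu)

lemma walk_no_in {R : ℕ → ℕ → Prop} {u : ℕ} (h : ∀ x, ¬ R x u) :
    ∀ n w, walkLen R n w u → w = u := by
  intro n
  induction n with
  | zero => intro w hw; exact hw
  | succ n ih =>
    rintro w ⟨z, hz, hwalk⟩
    exact absurd ((ih z hwalk) ▸ hz) (h w)

lemma walk_no_out {R : ℕ → ℕ → Prop} {u : ℕ} (h : ∀ x, ¬ R u x) :
    ∀ n w, walkLen R n u w → w = u := by
  intro n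
  cases n with
  | zero => intro w hw; exact (show u = w from hw).symm
  | succ n =>
    rintro w ⟨z, hz, _⟩
    exact absurd hz (h z)

lemma walk_arc_into {R : ℕ → ℕ → Prop} :
    ∀ n a b, walkLen R n a b → a ≠ b → ∃ x, R x b := by
  intro n
  induction n with
  | zero => intro a b h hab; exact absurd h hab
  | succ n ih =>
    rintro a b ⟨z, hz, hwalk⟩ hab
    by_cases hzb : z = b
    · exact ⟨a, hzb ▸ hz⟩
    · exact ih z b hwalk hzb

lemma restrict_congr {A B : ℕ → ℕ → Prop} {S : Finset ℕ}
    (h : ∀ x y, x ∈ S → y ∈ S → (A x y ↔ B x y)) : restrict A S = restrict B S := by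
  funext x y
  apply propext
  constructor
  · rintro ⟨ha, hx, hy⟩; exact ⟨(h x y hx hy).mp ha, hx, hy⟩
  · rintro ⟨ha, hx, hy⟩; exact ⟨(h x y hx hy).mpr ha, hx, hy⟩

lemma dco_singleton {A : ℕ → ℕ → Prop} {x : ℕ} (h : ¬ A x x) :
    DCo {x} (restrict A {x}) := by
  have he : restrict A {x} = fun _ _ => False := by
    funext a b
    apply propext
    constructor
    · rintro ⟨hab, ha, hb⟩
      rw [Finset.mem_singleton] at ha hb
      subst ha; subst hb
      exact h hab
    · exact False.elim
  rw [he]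
  exact DCo.single x

lemma comp_transfer {A A' : ℕ → ℕ → Prop} {V C : Finset ℕ} {u : ℕ}
    (hu : u ∉ V)
    (heq : ∀ x y, x ≠ u → y ≠ u → (A' x y ↔ A x y))
    (hC : IsStrongComponent A' (insert u V) C) (huC : u ∉ C) :
    IsStrongComponent A V C := by
  obtain ⟨hne, hsub, hconn, hmax⟩ := hC
  have hCV : C ⊆ V := by
    intro c hc
    rcases Finset.mem_insert.mp (hsub hc) with h | h
    · exact absurd (h ▸ hc) huC
    · exact h
  have key : ∀ D : Finset ℕ, D ⊆ V → restrict A' D = restrict A D := by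
    intro D hD
    exact restrict_congr fun x y hx hy =>
      heq x y (fun e => hu (e ▸ hD hx)) (fun e => hu (e ▸ hD hy))
  refine ⟨hne, hCV, ?_, ?_⟩
  · intro a ha b hb
    rw [← key C hCV]
    exact hconn a ha b hb
  · intro D hCD hDV hconnD
    apply hmax D hCD (hDV.trans (Finset.subset_insert u V))
    intro a ha b hb
    rw [key D hDV]
    exact hconnD a ha b hb

lemma twinDH_wf {V : Finset ℕ} {A : ℕ → ℕ → Prop} (h : TwinDH V A) :
    ∀ x y, A x y → x ∈ V ∧ y ∈ V ∧ x ≠ y := by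
  induction h with
  | single v => intro x y hxy; exact hxy.elim
  | @union V₁ V₂ A₁ A₂ hd h1 h2 ih1 ih2 =>
    rintro x y (h | h)
    · obtain ⟨hx, hy, hne⟩ := ih1 x y h
      exact ⟨Finset.mem_union_left _ hx, Finset.mem_union_left _ hy, hne⟩
    · obtain ⟨hx, hy, hne⟩ := ih2 x y h
      exact ⟨Finset.mem_union_right _ hx, Finset.mem_union_right _ hy, hne⟩
  | @twin W B v u auv avu hv hu hprev ih =>
    intro x y hxy
    have huv : u ≠ v := fun e => hu (e ▸ hv)
    simp only [twinArc] at hxy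
    rcases hxy with h | ⟨e1, e2, _⟩ | ⟨e1, e2, _⟩ | ⟨e1, h⟩ | ⟨e1, h⟩
    · obtain ⟨hx, hy, hne⟩ := ih x y h
      exact ⟨Finset.mem_insert_of_mem hx, Finset.mem_insert_of_mem hy, hne⟩
    · exact ⟨by rw [e1]; exact Finset.mem_insert_self u W,
        by rw [e2]; exact Finset.mem_insert_of_mem hv, by rw [e1, e2]; exact huv⟩
    · exact ⟨by rw [e1]; exact Finset.mem_insert_of_mem hv,
        by rw [e2]; exact Finset.mem_insert_self u W, by rw [e1, e2]; exact huv.symm⟩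
    · obtain ⟨_, hy, _⟩ := ih v y h
      exact ⟨by rw [e1]; exact Finset.mem_insert_self u W, Finset.mem_insert_of_mem hy,
        by rw [e1]; exact fun e => hu (e ▸ hy)⟩
    · obtain ⟨hx, _, _⟩ := ih x v h
      exact ⟨Finset.mem_insert_of_mem hx, by rw [e1]; exact Finset.mem_insert_self u W,
        by rw [e1]; exact fun e => hu (e.symm ▸ hx)⟩
  | @pendPlus W B a u ha hu hprev ih =>
    rintro x y (h | ⟨e1, e2⟩)
    · obtain ⟨hx, hy, hne⟩ := ih x y h
      exact ⟨Finset.mem_insert_of_mem hx, Finset.mem_insert_of_mem hy, hne⟩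
    · exact ⟨by rw [e1]; exact Finset.mem_insert_self u W,
        by rw [e2]; exact Finset.mem_insert_of_mem ha,
        by rw [e1, e2]; exact fun e => hu (e ▸ ha)⟩
  | @pendMinus W B a u ha hu hprev ih =>
    rintro x y (h | ⟨e1, e2⟩)
    · obtain ⟨hx, hy, hne⟩ := ih x y h
      exact ⟨Finset.mem_insert_of_mem hx, Finset.mem_insert_of_mem hy, hne⟩
    · exact ⟨by rw [e1]; exact Finset.mem_insert_of_mem ha,
        by rw [e2]; exact Finset.mem_insert_self u W,
        by rw [e1, e2]; exact fun e => hu (e.symm ▸ ha)⟩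

lemma dco_wf {V : Finset ℕ} {B : ℕ → ℕ → Prop} (h : DCo V B) :
    ∀ x y, B x y → x ∈ V ∧ y ∈ V := by
  induction h with
  | single v => intro x y hxy; exact hxy.elim
  | @union V₁ V₂ A₁ A₂ hd h1 h2 ih1 ih2 =>
    rintro x y (h | h)
    · exact ⟨Finset.mem_union_left _ (ih1 x y h).1, Finset.mem_union_left _ (ih1 x y h).2⟩
    · exact ⟨Finset.mem_union_right _ (ih2 x y h).1, Finset.mem_union_right _ (ih2 x y h).2⟩
  | @series V₁ V₂ A₁ A₂ hd h1 h2 ih1 ih2 =>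
    rintro x y (h | h | ⟨hx, hy⟩ | ⟨hx, hy⟩)
    · exact ⟨Finset.mem_union_left _ (ih1 x y h).1, Finset.mem_union_left _ (ih1 x y h).2⟩
    · exact ⟨Finset.mem_union_right _ (ih2 x y h).1, Finset.mem_union_right _ (ih2 x y h).2⟩
    · exact ⟨Finset.mem_union_left _ hx, Finset.mem_union_right _ hy⟩
    · exact ⟨Finset.mem_union_right _ hx, Finset.mem_union_left _ hy⟩
  | @order V₁ V₂ A₁ A₂ hd h1 h2 ih1 ih2 =>
    rintro x y (h | h | ⟨hx, hy⟩)
    · exact ⟨Finset.mem_union_left _ (ih1 x y h).1, Finset.mem_union_left _ (ih1 x y h).2⟩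
    · exact ⟨Finset.mem_union_right _ (ih2 x y h).1, Finset.mem_union_right _ (ih2 x y h).2⟩
    · exact ⟨Finset.mem_union_left _ hx, Finset.mem_union_right _ hy⟩

set_option maxHeartbeats 1000000 in
lemma dco_twin {V : Finset ℕ} {B : ℕ → ℕ → Prop} (h : DCo V B) :
    ∀ v ∈ V, ∀ u, u ∉ V → ∀ auv avu : Prop, DCo (insert u V) (twinArc B v u auv avu) := by
  induction h with
  | single w =>
    intro v hv u hu auv avu
    have hvw : v = w := Finset.mem_singleton.mp hv
    subst hvw
    have huv : u ≠ v := fun e => hu (e ▸ Finset.mem_singleton_self v)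
    have hdisj : Disjoint ({u} : Finset ℕ) {v} := Finset.disjoint_singleton.mpr huv
    rw [Finset.insert_eq]
    by_cases h1 : auv <;> by_cases h2 : avu
    · have hrel : twinArc (fun _ _ => False) v u auv avu = (fun x y : ℕ =>
          False ∨ False ∨ (x ∈ ({u} : Finset ℕ) ∧ y ∈ ({v} : Finset ℕ)) ∨
            (x ∈ ({v} : Finset ℕ) ∧ y ∈ ({u} : Finset ℕ))) := by
        funext x y; apply propext
        simp only [twinArc, Finset.mem_singleton]
        tauto
      rw [hrel]
      exact DCo.series hdisj (DCo.single u) (DCo.single v)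
    · have hrel : twinArc (fun _ _ => False) v u auv avu = (fun x y : ℕ =>
          False ∨ False ∨ (x ∈ ({u} : Finset ℕ) ∧ y ∈ ({v} : Finset ℕ))) := by
        funext x y; apply propext
        simp only [twinArc, Finset.mem_singleton]
        tauto
      rw [hrel]
      exact DCo.order hdisj (DCo.single u) (DCo.single v)
    · rw [Finset.union_comm]
      have hrel : twinArc (fun _ _ => False) v u auv avu = (fun x y : ℕ =>
          False ∨ False ∨ (x ∈ ({v} : Finset ℕ) ∧ y ∈ ({u} : Finset ℕ))) := by
        funext x y; apply propext
        simp only [twinArc, Finset.mem_singleton]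
        tauto
      rw [hrel]
      exact DCo.order hdisj.symm (DCo.single v) (DCo.single u)
    · have hrel : twinArc (fun _ _ => False) v u auv avu = (fun x y : ℕ =>
          False ∨ False) := by
        funext x y; apply propext
        simp only [twinArc, Finset.mem_singleton]
        tauto
      rw [hrel]
      exact DCo.union hdisj (DCo.single u) (DCo.single v)
  | @union V₁ V₂ A₁ A₂ hd h1 h2 ih1 ih2 =>
    intro v hv u hu auv avu
    have hu1 : u ∉ V₁ := fun h => hu (Finset.mem_union_left _ h)
    have hu2 : u ∉ V₂ := fun h => hu (Finset.mem_union_right _ h)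
    rcases Finset.mem_union.mp hv with hv1 | hv2
    · have hd' : Disjoint (insert u V₁) V₂ := by
        rw [Finset.disjoint_left]
        intro x hx
        rcases Finset.mem_insert.mp hx with rfl | hx1
        · exact hu2
        · exact Finset.disjoint_left.mp hd hx1
      have hbig := DCo.union hd' (ih1 v hv1 u hu1 auv avu) h2
      rw [Finset.insert_union] at hbig
      have hrel : twinArc (fun x y => A₁ x y ∨ A₂ x y) v u auv avu =
          (fun x y => twinArc A₁ v u auv avu x y ∨ A₂ x y) := by
        funext x y; apply propext
        have n1 : ¬ A₂ v y := fun h => Finset.disjoint_left.mp hd hv1 (dco_wf h2 v y h).1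
        have n2 : ¬ A₂ x v := fun h => Finset.disjoint_left.mp hd hv1 (dco_wf h2 x v h).2
        simp only [twinArc]
        constructor
        · rintro ((h | h) | h | h | ⟨e, (h | h)⟩ | ⟨e, (h | h)⟩)
          · exact Or.inl (Or.inl h)
          · exact Or.inr h
          · exact Or.inl (Or.inr (Or.inl h))
          · exact Or.inl (Or.inr (Or.inr (Or.inl h)))
          · exact Or.inl (Or.inr (Or.inr (Or.inr (Or.inl ⟨e, h⟩))))
          · exact (n1 h).elim
          · exact Or.inl (Or.inr (Or.inr (Or.inr (Or.inr ⟨e, h⟩))))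
          · exact (n2 h).elim
        · rintro ((h | h | h | ⟨e, h⟩ | ⟨e, h⟩) | h)
          · exact Or.inl (Or.inl h)
          · exact Or.inr (Or.inl h)
          · exact Or.inr (Or.inr (Or.inl h))
          · exact Or.inr (Or.inr (Or.inr (Or.inl ⟨e, Or.inl h⟩)))
          · exact Or.inr (Or.inr (Or.inr (Or.inr ⟨e, Or.inl h⟩)))
          · exact Or.inl (Or.inr h)
      rw [hrel]
      exact hbig
    · have hd' : Disjoint V₁ (insert u V₂) := by
        rw [Finset.disjoint_right]
        intro x hx
        rcases Finset.mem_insert.mp hx with rfl | hx2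
        · exact hu1
        · exact Finset.disjoint_right.mp hd hx2
      have hbig := DCo.union hd' h1 (ih2 v hv2 u hu2 auv avu)
      rw [Finset.union_insert] at hbig
      have hrel : twinArc (fun x y => A₁ x y ∨ A₂ x y) v u auv avu =
          (fun x y => A₁ x y ∨ twinArc A₂ v u auv avu x y) := by
        funext x y; apply propext
        have n1 : ¬ A₁ v y := fun h => Finset.disjoint_right.mp hd hv2 (dco_wf h1 v y h).1
        have n2 : ¬ A₁ x v := fun h => Finset.disjoint_right.mp hd hv2 (dco_wf h1 x v h).2
        simp only [twinArc]
        constructor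
        · rintro ((h | h) | h | h | ⟨e, (h | h)⟩ | ⟨e, (h | h)⟩)
          · exact Or.inl h
          · exact Or.inr (Or.inl h)
          · exact Or.inr (Or.inr (Or.inl h))
          · exact Or.inr (Or.inr (Or.inr (Or.inl h)))
          · exact (n1 h).elim
          · exact Or.inr (Or.inr (Or.inr (Or.inr (Or.inl ⟨e, h⟩))))
          · exact (n2 h).elim
          · exact Or.inr (Or.inr (Or.inr (Or.inr (Or.inr ⟨e, h⟩))))
        · rintro (h | (h | h | h | ⟨e, h⟩ | ⟨e, h⟩))
          · exact Or.inl (Or.inl h)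
          · exact Or.inl (Or.inr h)
          · exact Or.inr (Or.inl h)
          · exact Or.inr (Or.inr (Or.inl h))
          · exact Or.inr (Or.inr (Or.inr (Or.inl ⟨e, Or.inr h⟩)))
          · exact Or.inr (Or.inr (Or.inr (Or.inr ⟨e, Or.inr h⟩)))
      rw [hrel]
      exact hbig
  | @series V₁ V₂ A₁ A₂ hd h1 h2 ih1 ih2 =>
    intro v hv u hu auv avu
    have hu1 : u ∉ V₁ := fun h => hu (Finset.mem_union_left _ h)
    have hu2 : u ∉ V₂ := fun h => hu (Finset.mem_union_right _ h)
    rcases Finset.mem_union.mp hv with hv1 | hv2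
    · have hd' : Disjoint (insert u V₁) V₂ := by
        rw [Finset.disjoint_left]
        intro x hx
        rcases Finset.mem_insert.mp hx with rfl | hx1
        · exact hu2
        · exact Finset.disjoint_left.mp hd hx1
      have hbig := DCo.series hd' (ih1 v hv1 u hu1 auv avu) h2
      rw [Finset.insert_union] at hbig
      have hrel : twinArc
          (fun x y => A₁ x y ∨ A₂ x y ∨ (x ∈ V₁ ∧ y ∈ V₂) ∨ (x ∈ V₂ ∧ y ∈ V₁)) v u auv avu =
          (fun x y => twinArc A₁ v u auv avu x y ∨ A₂ x y ∨
            (x ∈ insert u V₁ ∧ y ∈ V₂) ∨ (x ∈ V₂ ∧ y ∈ insert u V₁)) := by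
        funext x y; apply propext
        have n1 : ¬ A₂ v y := fun h => Finset.disjoint_left.mp hd hv1 (dco_wf h2 v y h).1
        have n2 : ¬ A₂ x v := fun h => Finset.disjoint_left.mp hd hv1 (dco_wf h2 x v h).2
        have hvn2 : v ∉ V₂ := Finset.disjoint_left.mp hd hv1
        simp only [twinArc]
        constructor
        · rintro ((h | h | ⟨h1, h2⟩ | ⟨h1, h2⟩) | h | h |
            ⟨e, (h | h | ⟨hva, h2⟩ | ⟨hvb, h2⟩)⟩ | ⟨e, (h | h | ⟨h1, hvb⟩ | ⟨h1, hva⟩)⟩)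
          · exact Or.inl (Or.inl h)
          · exact Or.inr (Or.inl h)
          · exact Or.inr (Or.inr (Or.inl ⟨Finset.mem_insert_of_mem h1, h2⟩))
          · exact Or.inr (Or.inr (Or.inr ⟨h1, Finset.mem_insert_of_mem h2⟩))
          · exact Or.inl (Or.inr (Or.inl h))
          · exact Or.inl (Or.inr (Or.inr (Or.inl h)))
          · exact Or.inl (Or.inr (Or.inr (Or.inr (Or.inl ⟨e, h⟩))))
          · exact (n1 h).elim
          · exact Or.inr (Or.inr (Or.inl ⟨by rw [e]; exact Finset.mem_insert_self u V₁, h2⟩))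
          · exact (hvn2 hvb).elim
          · exact Or.inl (Or.inr (Or.inr (Or.inr (Or.inr ⟨e, h⟩))))
          · exact (n2 h).elim
          · exact (hvn2 hvb).elim
          · exact Or.inr (Or.inr (Or.inr ⟨h1, by rw [e]; exact Finset.mem_insert_self u V₁⟩))
        · rintro ((h | h | h | ⟨e, h⟩ | ⟨e, h⟩) | h | ⟨hx, hy⟩ | ⟨hx, hy⟩)
          · exact Or.inl (Or.inl h)
          · exact Or.inr (Or.inl h)
          · exact Or.inr (Or.inr (Or.inl h))
          · exact Or.inr (Or.inr (Or.inr (Or.inl ⟨e, Or.inl h⟩)))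
          · exact Or.inr (Or.inr (Or.inr (Or.inr ⟨e, Or.inl h⟩)))
          · exact Or.inl (Or.inr (Or.inl h))
          · rcases Finset.mem_insert.mp hx with e | hx1
            · exact Or.inr (Or.inr (Or.inr (Or.inl ⟨e, Or.inr (Or.inr (Or.inl ⟨hv1, hy⟩))⟩)))
            · exact Or.inl (Or.inr (Or.inr (Or.inl ⟨hx1, hy⟩)))
          · rcases Finset.mem_insert.mp hy with e | hy1
            · exact Or.inr (Or.inr (Or.inr (Or.inr ⟨e, Or.inr (Or.inr (Or.inr ⟨hx, hv1⟩))⟩)))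
            · exact Or.inl (Or.inr (Or.inr (Or.inr ⟨hx, hy1⟩)))
      rw [hrel]
      exact hbig
    · have hd' : Disjoint V₁ (insert u V₂) := by
        rw [Finset.disjoint_right]
        intro x hx
        rcases Finset.mem_insert.mp hx with rfl | hx2
        · exact hu1
        · exact Finset.disjoint_right.mp hd hx2
      have hbig := DCo.series hd' h1 (ih2 v hv2 u hu2 auv avu)
      rw [Finset.union_insert] at hbig
      have hrel : twinArc
          (fun x y => A₁ x y ∨ A₂ x y ∨ (x ∈ V₁ ∧ y ∈ V₂) ∨ (x ∈ V₂ ∧ y ∈ V₁)) v u auv avu =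
          (fun x y => A₁ x y ∨ twinArc A₂ v u auv avu x y ∨
            (x ∈ V₁ ∧ y ∈ insert u V₂) ∨ (x ∈ insert u V₂ ∧ y ∈ V₁)) := by
        funext x y; apply propext
        have n1 : ¬ A₁ v y := fun h => Finset.disjoint_right.mp hd hv2 (dco_wf h1 v y h).1
        have n2 : ¬ A₁ x v := fun h => Finset.disjoint_right.mp hd hv2 (dco_wf h1 x v h).2
        have hvn1 : v ∉ V₁ := Finset.disjoint_right.mp hd hv2
        simp only [twinArc]
        constructor
        · rintro ((h | h | ⟨h1, h2⟩ | ⟨h1, h2⟩) | h | h |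
            ⟨e, (h | h | ⟨hva, h2⟩ | ⟨hvb, h2⟩)⟩ | ⟨e, (h | h | ⟨h1, hvb⟩ | ⟨h1, hva⟩)⟩)
          · exact Or.inl h
          · exact Or.inr (Or.inl (Or.inl h))
          · exact Or.inr (Or.inr (Or.inl ⟨h1, Finset.mem_insert_of_mem h2⟩))
          · exact Or.inr (Or.inr (Or.inr ⟨Finset.mem_insert_of_mem h1, h2⟩))
          · exact Or.inr (Or.inl (Or.inr (Or.inl h)))
          · exact Or.inr (Or.inl (Or.inr (Or.inr (Or.inl h))))
          · exact (n1 h).elim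
          · exact Or.inr (Or.inl (Or.inr (Or.inr (Or.inr (Or.inl ⟨e, h⟩)))))
          · exact (hvn1 hva).elim
          · exact Or.inr (Or.inr (Or.inr ⟨by rw [e]; exact Finset.mem_insert_self u V₂, h2⟩))
          · exact (n2 h).elim
          · exact Or.inr (Or.inl (Or.inr (Or.inr (Or.inr (Or.inr ⟨e, h⟩)))))
          · exact Or.inr (Or.inr (Or.inl ⟨h1, by rw [e]; exact Finset.mem_insert_self u V₂⟩))
          · exact (hvn1 hva).elim
        · rintro (h | (h | h | h | ⟨e, h⟩ | ⟨e, h⟩) | ⟨hx, hy⟩ | ⟨hx, hy⟩)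
          · exact Or.inl (Or.inl h)
          · exact Or.inl (Or.inr (Or.inl h))
          · exact Or.inr (Or.inl h)
          · exact Or.inr (Or.inr (Or.inl h))
          · exact Or.inr (Or.inr (Or.inr (Or.inl ⟨e, Or.inr (Or.inl h)⟩)))
          · exact Or.inr (Or.inr (Or.inr (Or.inr ⟨e, Or.inr (Or.inl h)⟩)))
          · rcases Finset.mem_insert.mp hy with e | hy2
            · exact Or.inr (Or.inr (Or.inr (Or.inr ⟨e, Or.inr (Or.inr (Or.inl ⟨hx, hv2⟩))⟩)))
            · exact Or.inl (Or.inr (Or.inr (Or.inl ⟨hx, hy2⟩)))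
          · rcases Finset.mem_insert.mp hx with e | hx2
            · exact Or.inr (Or.inr (Or.inr (Or.inl ⟨e, Or.inr (Or.inr (Or.inr ⟨hv2, hy⟩))⟩)))
            · exact Or.inl (Or.inr (Or.inr (Or.inr ⟨hx2, hy⟩)))
      rw [hrel]
      exact hbig
  | @order V₁ V₂ A₁ A₂ hd h1 h2 ih1 ih2 =>
    intro v hv u hu auv avu
    have hu1 : u ∉ V₁ := fun h => hu (Finset.mem_union_left _ h)
    have hu2 : u ∉ V₂ := fun h => hu (Finset.mem_union_right _ h)
    rcases Finset.mem_union.mp hv with hv1 | hv2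
    · have hd' : Disjoint (insert u V₁) V₂ := by
        rw [Finset.disjoint_left]
        intro x hx
        rcases Finset.mem_insert.mp hx with rfl | hx1
        · exact hu2
        · exact Finset.disjoint_left.mp hd hx1
      have hbig := DCo.order hd' (ih1 v hv1 u hu1 auv avu) h2
      rw [Finset.insert_union] at hbig
      have hrel : twinArc (fun x y => A₁ x y ∨ A₂ x y ∨ (x ∈ V₁ ∧ y ∈ V₂)) v u auv avu =
          (fun x y => twinArc A₁ v u auv avu x y ∨ A₂ x y ∨
            (x ∈ insert u V₁ ∧ y ∈ V₂)) := by
        funext x y; apply propext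
        have n1 : ¬ A₂ v y := fun h => Finset.disjoint_left.mp hd hv1 (dco_wf h2 v y h).1
        have n2 : ¬ A₂ x v := fun h => Finset.disjoint_left.mp hd hv1 (dco_wf h2 x v h).2
        have hvn2 : v ∉ V₂ := Finset.disjoint_left.mp hd hv1
        simp only [twinArc]
        constructor
        · rintro ((h | h | ⟨h1, h2⟩) | h | h |
            ⟨e, (h | h | ⟨hva, h2⟩)⟩ | ⟨e, (h | h | ⟨h1, hvb⟩)⟩)
          · exact Or.inl (Or.inl h)
          · exact Or.inr (Or.inl h)
          · exact Or.inr (Or.inr ⟨Finset.mem_insert_of_mem h1, h2⟩)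
          · exact Or.inl (Or.inr (Or.inl h))
          · exact Or.inl (Or.inr (Or.inr (Or.inl h)))
          · exact Or.inl (Or.inr (Or.inr (Or.inr (Or.inl ⟨e, h⟩))))
          · exact (n1 h).elim
          · exact Or.inr (Or.inr ⟨by rw [e]; exact Finset.mem_insert_self u V₁, h2⟩)
          · exact Or.inl (Or.inr (Or.inr (Or.inr (Or.inr ⟨e, h⟩))))
          · exact (n2 h).elim
          · exact (hvn2 hvb).elim
        · rintro ((h | h | h | ⟨e, h⟩ | ⟨e, h⟩) | h | ⟨hx, hy⟩)
          · exact Or.inl (Or.inl h)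
          · exact Or.inr (Or.inl h)
          · exact Or.inr (Or.inr (Or.inl h))
          · exact Or.inr (Or.inr (Or.inr (Or.inl ⟨e, Or.inl h⟩)))
          · exact Or.inr (Or.inr (Or.inr (Or.inr ⟨e, Or.inl h⟩)))
          · exact Or.inl (Or.inr (Or.inl h))
          · rcases Finset.mem_insert.mp hx with e | hx1
            · exact Or.inr (Or.inr (Or.inr (Or.inl ⟨e, Or.inr (Or.inr ⟨hv1, hy⟩)⟩)))
            · exact Or.inl (Or.inr (Or.inr ⟨hx1, hy⟩))
      rw [hrel]
      exact hbig
    · have hd' : Disjoint V₁ (insert u V₂) := by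
        rw [Finset.disjoint_right]
        intro x hx
        rcases Finset.mem_insert.mp hx with rfl | hx2
        · exact hu1
        · exact Finset.disjoint_right.mp hd hx2
      have hbig := DCo.order hd' h1 (ih2 v hv2 u hu2 auv avu)
      rw [Finset.union_insert] at hbig
      have hrel : twinArc (fun x y => A₁ x y ∨ A₂ x y ∨ (x ∈ V₁ ∧ y ∈ V₂)) v u auv avu =
          (fun x y => A₁ x y ∨ twinArc A₂ v u auv avu x y ∨
            (x ∈ V₁ ∧ y ∈ insert u V₂)) := by
        funext x y; apply propext
        have n1 : ¬ A₁ v y := fun h => Finset.disjoint_right.mp hd hv2 (dco_wf h1 v y h).1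
        have n2 : ¬ A₁ x v := fun h => Finset.disjoint_right.mp hd hv2 (dco_wf h1 x v h).2
        have hvn1 : v ∉ V₁ := Finset.disjoint_right.mp hd hv2
        simp only [twinArc]
        constructor
        · rintro ((h | h | ⟨h1, h2⟩) | h | h |
            ⟨e, (h | h | ⟨hva, h2⟩)⟩ | ⟨e, (h | h | ⟨h1, hvb⟩)⟩)
          · exact Or.inl h
          · exact Or.inr (Or.inl (Or.inl h))
          · exact Or.inr (Or.inr ⟨h1, Finset.mem_insert_of_mem h2⟩)
          · exact Or.inr (Or.inl (Or.inr (Or.inl h)))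
          · exact Or.inr (Or.inl (Or.inr (Or.inr (Or.inl h))))
          · exact (n1 h).elim
          · exact Or.inr (Or.inl (Or.inr (Or.inr (Or.inr (Or.inl ⟨e, h⟩)))))
          · exact (hvn1 hva).elim
          · exact (n2 h).elim
          · exact Or.inr (Or.inl (Or.inr (Or.inr (Or.inr (Or.inr ⟨e, h⟩)))))
          · exact Or.inr (Or.inr ⟨h1, by rw [e]; exact Finset.mem_insert_self u V₂⟩)
        · rintro (h | (h | h | h | ⟨e, h⟩ | ⟨e, h⟩) | ⟨hx, hy⟩)
          · exact Or.inl (Or.inl h)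
          · exact Or.inl (Or.inr (Or.inl h))
          · exact Or.inr (Or.inl h)
          · exact Or.inr (Or.inr (Or.inl h))
          · exact Or.inr (Or.inr (Or.inr (Or.inl ⟨e, Or.inr (Or.inl h)⟩)))
          · exact Or.inr (Or.inr (Or.inr (Or.inr ⟨e, Or.inr (Or.inl h)⟩)))
          · rcases Finset.mem_insert.mp hy with e | hy2
            · exact Or.inr (Or.inr (Or.inr (Or.inr ⟨e, Or.inr (Or.inr ⟨hx, hv2⟩)⟩)))
            · exact Or.inl (Or.inr (Or.inr ⟨hx, hy2⟩))
      rw [hrel]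
      exact hbig

lemma union_comp {V₁ V₂ C : Finset ℕ} {A₁ A₂ : ℕ → ℕ → Prop}
    (hd : Disjoint V₁ V₂)
    (wf1 : ∀ x y, A₁ x y → x ∈ V₁ ∧ y ∈ V₁)
    (wf2 : ∀ x y, A₂ x y → x ∈ V₂ ∧ y ∈ V₂)
    (hC : IsStrongComponent (fun x y => A₁ x y ∨ A₂ x y) (V₁ ∪ V₂) C)
    {c : ℕ} (hc : c ∈ C) (hc1 : c ∈ V₁) :
    IsStrongComponent A₁ V₁ C ∧
      restrict (fun x y => A₁ x y ∨ A₂ x y) C = restrict A₁ C := by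
  obtain ⟨hne, hsub, hconn, hmax⟩ := hC
  have hpres : ∀ x y, restrict (fun x y => A₁ x y ∨ A₂ x y) C x y → x ∈ V₁ → y ∈ V₁ := by
    rintro x y ⟨h | h, _, _⟩ hx
    · exact (wf1 x y h).2
    · exact absurd hx (Finset.disjoint_right.mp hd (wf2 x y h).1)
  have hCV₁ : C ⊆ V₁ := by
    intro w hw
    obtain ⟨n, hwalk⟩ := hconn c hc w hw
    exact walk_preserve hpres n c w hwalk hc1
  have hres : ∀ D : Finset ℕ, D ⊆ V₁ →
      restrict (fun x y => A₁ x y ∨ A₂ x y) D = restrict A₁ D := by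
    intro D hD
    apply restrict_congr
    intro x y hx hy
    constructor
    · rintro (h | h)
      · exact h
      · exact absurd (hD hx) (Finset.disjoint_right.mp hd (wf2 x y h).1)
    · exact Or.inl
  refine ⟨⟨hne, hCV₁, ?_, ?_⟩, hres C hCV₁⟩
  · intro a ha b hb
    rw [← hres C hCV₁]
    exact hconn a ha b hb
  · intro D hCD hDV hconnD
    apply hmax D hCD (hDV.trans Finset.subset_union_left)
    intro a ha b hb
    rw [hres D hDV]
    exact hconnD a ha b hb

end Helpers

set_option maxHeartbeats 1000000 in
theorem stmt_5 (V : Finset ℕ) (A : ℕ → ℕ → Prop) (h : TwinDH V A)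
    (C : Finset ℕ) (hC : IsStrongComponent A V C) :
    DCo C (restrict A C) := by
  revert C
  induction h with
  | single w =>
    intro C hC
    obtain ⟨⟨c, hc⟩, hsub, _, _⟩ := hC
    have hcw : c = w := Finset.mem_singleton.mp (hsub hc)
    have hCeq : C = {w} := Finset.eq_singleton_iff_unique_mem.mpr
      ⟨hcw ▸ hc, fun w' hw' => Finset.mem_singleton.mp (hsub hw')⟩
    rw [hCeq]
    exact dco_singleton (fun f => f)
  | @union V₁ V₂ A₁ A₂ hd h1 h2 ih1 ih2 =>
    intro C hC
    obtain ⟨c, hc⟩ := hC.1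
    rcases Finset.mem_union.mp (hC.2.1 hc) with hc1 | hc2
    · obtain ⟨hcomp, hres⟩ := union_comp hd (fun x y hh => ⟨(twinDH_wf h1 x y hh).1, (twinDH_wf h1 x y hh).2.1⟩)
        (fun x y hh => ⟨(twinDH_wf h2 x y hh).1, (twinDH_wf h2 x y hh).2.1⟩) hC hc hc1
      rw [hres]
      exact ih1 C hcomp
    · have e1 : (fun x y => A₂ x y ∨ A₁ x y) = (fun x y => A₁ x y ∨ A₂ x y) :=
        funext fun x => funext fun y => propext or_comm
      have hC' : IsStrongComponent (fun x y => A₂ x y ∨ A₁ x y) (V₂ ∪ V₁) C := by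
        rw [e1, Finset.union_comm]
        exact hC
      obtain ⟨hcomp, hres⟩ := union_comp hd.symm (fun x y hh => ⟨(twinDH_wf h2 x y hh).1, (twinDH_wf h2 x y hh).2.1⟩)
        (fun x y hh => ⟨(twinDH_wf h1 x y hh).1, (twinDH_wf h1 x y hh).2.1⟩) hC' hc hc2
      have hres' : restrict (fun x y => A₁ x y ∨ A₂ x y) C = restrict A₂ C := by
        rw [← hres, ← e1]
      rw [hres']
      exact ih2 C hcomp
  | @twin W B v u auv avu hv hu hprev ih =>
    intro C hC
    have wf := twinDH_wf hprev
    have huv : u ≠ v := fun e => hu (e ▸ hv)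
    have hA'uu : ¬ twinArc B v u auv avu u u := by
      intro hh
      simp only [twinArc] at hh
      rcases hh with hh | ⟨_, e, _⟩ | ⟨e, _, _⟩ | ⟨_, hh⟩ | ⟨_, hh⟩
      · exact hu (wf _ _ hh).1
      · exact huv e
      · exact huv e
      · exact hu (wf _ _ hh).2.1
      · exact hu (wf _ _ hh).1
    have hA'u_out : ∀ y, y ≠ u → twinArc B v u auv avu u y → (y = v ∧ auv) ∨ B v y := by
      intro y hy hh
      simp only [twinArc] at hh
      rcases hh with hh | ⟨_, e, ha⟩ | ⟨e, _, _⟩ | ⟨_, hh⟩ | ⟨e, _⟩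
      · exact absurd (wf _ _ hh).1 hu
      · exact Or.inl ⟨e, ha⟩
      · exact absurd e huv
      · exact Or.inr hh
      · exact absurd e hy
    have hA'u_in : ∀ x, x ≠ u → twinArc B v u auv avu x u → (x = v ∧ avu) ∨ B x v := by
      intro x hx hh
      simp only [twinArc] at hh
      rcases hh with hh | ⟨e, _, _⟩ | ⟨e, _, ha⟩ | ⟨e, _⟩ | ⟨_, hh⟩
      · exact absurd (wf _ _ hh).2.1 hu
      · exact absurd e hx
      · exact Or.inl ⟨e, ha⟩
      · exact absurd e hx
      · exact Or.inr hh
    have hA'base : ∀ x y, x ≠ u → y ≠ u → (twinArc B v u auv avu x y ↔ B x y) := by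
      intro x y hx hy
      constructor
      · intro hh
        simp only [twinArc] at hh
        rcases hh with hh | ⟨e, _, _⟩ | ⟨_, e, _⟩ | ⟨e, _⟩ | ⟨e, _⟩
        · exact hh
        · exact absurd e hx
        · exact absurd e hy
        · exact absurd e hx
        · exact absurd e hy
      · intro hh
        exact Or.inl hh
    by_cases hup : u ∈ C
    · obtain ⟨hne, hsub, hconn, hmax⟩ := hC
      by_cases hex : ∃ w ∈ C, w ≠ u
      · obtain ⟨w0, hw0C, hw0u⟩ := hex
        -- u has an out-neighbor and an in-neighbor inside C
        have hout : ∃ w₁ ∈ C, w₁ ≠ u ∧ twinArc B v u auv avu u w₁ := by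
          obtain ⟨n, hwalk⟩ := hconn u hup w0 hw0C
          cases n with
          | zero => exact absurd (show u = w0 from hwalk).symm hw0u
          | succ n =>
            obtain ⟨z, ⟨hz, _, hzC⟩, _⟩ := hwalk
            exact ⟨z, hzC, fun e => hA'uu (e ▸ hz), hz⟩
        have hin : ∃ w₂ ∈ C, w₂ ≠ u ∧ twinArc B v u auv avu w₂ u := by
          obtain ⟨n, hwalk⟩ := hconn w0 hw0C u hup
          obtain ⟨x, hx⟩ := walk_arc_into n w0 u hwalk hw0u
          obtain ⟨hxu, hxC, _⟩ := hx
          exact ⟨x, hxC, fun e => hA'uu (e ▸ hxu), hxu⟩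
        obtain ⟨w₁, hw1C, hw1u, harc1⟩ := hout
        obtain ⟨w₂, hw2C, hw2u, harc2⟩ := hin
        -- v must belong to C
        have hvC : v ∈ C := by
          by_contra hvC
          have hw1v : w₁ ≠ v := fun e => hvC (e ▸ hw1C)
          have hw2v : w₂ ≠ v := fun e => hvC (e ▸ hw2C)
          have hv_w1 : B v w₁ := by
            rcases hA'u_out w₁ hw1u harc1 with ⟨e, _⟩ | hh
            · exact absurd e hw1v
            · exact hh
          have hw2_v : B w₂ v := by
            rcases hA'u_in w₂ hw2u harc2 with ⟨e, _⟩ | hh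
            · exact absurd e hw2v
            · exact hh
          have hCD : C ⊆ insert v C := Finset.subset_insert v C
          have hlift : ∀ a ∈ C, ∀ b ∈ C, Reach (restrict (twinArc B v u auv avu) (insert v C)) a b := by
            intro a ha b hb
            refine reach_mono ?_ (hconn a ha b hb)
            rintro x y ⟨hxy, hx, hy⟩
            exact ⟨hxy, hCD hx, hCD hy⟩
          have harc_v_w1 : restrict (twinArc B v u auv avu) (insert v C) v w₁ :=
            ⟨Or.inl hv_w1, Finset.mem_insert_self v C, hCD hw1C⟩
          have harc_w2_v : restrict (twinArc B v u auv avu) (insert v C) w₂ v :=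
            ⟨Or.inl hw2_v, hCD hw2C, Finset.mem_insert_self v C⟩
          have hreach : StronglyConn (twinArc B v u auv avu) (insert v C) := by
            intro a ha b hb
            rcases Finset.mem_insert.mp ha with rfl | haC
            · rcases Finset.mem_insert.mp hb with rfl | hbC
              · exact ⟨0, rfl⟩
              · exact reach_trans ⟨1, w₁, harc_v_w1, rfl⟩ (hlift w₁ hw1C b hbC)
            · rcases Finset.mem_insert.mp hb with rfl | hbC
              · exact reach_trans (hlift a haC w₂ hw2C) ⟨1, b, harc_w2_v, rfl⟩
              · exact hlift a haC b hbC
          have hDsub : insert v C ⊆ insert u W := by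
            intro x hx
            rcases Finset.mem_insert.mp hx with rfl | hxC
            · exact Finset.mem_insert_of_mem hv
            · exact hsub hxC
          have heq := hmax (insert v C) hCD hDsub hreach
          exact hvC (heq ▸ Finset.mem_insert_self v C)
        set C₀ := C.erase u with hC₀def
        have hvC₀ : v ∈ C₀ := by
          rw [hC₀def]
          exact Finset.mem_erase.mpr ⟨fun e => huv e.symm, hvC⟩
        have hC₀C : C₀ ⊆ C := by rw [hC₀def]; exact Finset.erase_subset u C
        have hC₀mem : ∀ x, x ∈ C₀ ↔ x ≠ u ∧ x ∈ C := by
          intro x; rw [hC₀def]; exact Finset.mem_erase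
        have hC₀V : C₀ ⊆ W := by
          intro x hx
          obtain ⟨hxu, hxC⟩ := (hC₀mem x).mp hx
          rcases Finset.mem_insert.mp (hsub hxC) with e | hh
          · exact absurd e hxu
          · exact hh
        have havoid : ∀ n, ∀ a ∈ C₀, ∀ b ∈ C₀,
            walkLen (restrict (twinArc B v u auv avu) C) n a b → Reach (restrict B C₀) a b := by
          intro n
          induction n using Nat.strong_induction_on with
          | _ n IH =>
            intro a ha b hb hwalk
            cases n with
            | zero => exact ⟨0, hwalk⟩
            | succ m =>
              obtain ⟨z, ⟨hz, _, hzC⟩, hwalk⟩ := hwalk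
              have hau : a ≠ u := ((hC₀mem a).mp ha).1
              by_cases hzu : z = u
              · rw [hzu] at hz hwalk
                cases m with
                | zero =>
                  exact absurd (show u = b from hwalk).symm ((hC₀mem b).mp hb).1
                | succ k =>
                  obtain ⟨z₂, ⟨hz₂, _, hz2C⟩, hwalk₂⟩ := hwalk
                  have hz2u : z₂ ≠ u := fun e => hA'uu (e ▸ hz₂)
                  have hz2C₀ : z₂ ∈ C₀ := (hC₀mem z₂).mpr ⟨hz2u, hz2C⟩
                  have h1 := hA'u_in a hau hz
                  have h2 := hA'u_out z₂ hz2u hz₂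
                  have hreach_az2 : Reach (restrict B C₀) a z₂ := by
                    rcases h1 with ⟨hav, _⟩ | h1 <;> rcases h2 with ⟨hz2v, _⟩ | h2
                    · exact ⟨0, show a = z₂ by rw [hav, hz2v]⟩
                    · exact ⟨1, z₂, ⟨by rw [hav]; exact h2, ha, hz2C₀⟩, rfl⟩
                    · exact ⟨1, z₂, ⟨by rw [hz2v]; exact h1, ha, hz2C₀⟩, rfl⟩
                    · exact ⟨2, v, ⟨h1, ha, hvC₀⟩, z₂, ⟨h2, hvC₀, hz2C₀⟩, rfl⟩
                  exact reach_trans hreach_az2 (IH k (by omega) z₂ hz2C₀ b hb hwalk₂)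
              · have hzC₀ : z ∈ C₀ := (hC₀mem z).mpr ⟨hzu, hzC⟩
                have haz : B a z := (hA'base a z hau hzu).mp hz
                exact reach_trans ⟨1, z, ⟨haz, ha, hzC₀⟩, rfl⟩
                  (IH m (by omega) z hzC₀ b hb hwalk)
        have hconn₀ : StronglyConn B C₀ := by
          intro a ha b hb
          obtain ⟨n, hwalk⟩ := hconn a (hC₀C ha) b (hC₀C hb)
          exact havoid n a ha b hb hwalk
        have hcomp₀ : IsStrongComponent B W C₀ := by
          refine ⟨⟨v, hvC₀⟩, hC₀V, hconn₀, ?_⟩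
          intro D hC₀D hDV hconnD
          have huD : u ∉ D := fun hh => hu (hDV hh)
          have hw1C₀ : w₁ ∈ C₀ := (hC₀mem w₁).mpr ⟨hw1u, hw1C⟩
          have hw2C₀ : w₂ ∈ C₀ := (hC₀mem w₂).mpr ⟨hw2u, hw2C⟩
          have hw1D : w₁ ∈ D := hC₀D hw1C₀
          have hw2D : w₂ ∈ D := hC₀D hw2C₀
          have hliftD : ∀ a ∈ D, ∀ b ∈ D,
              Reach (restrict (twinArc B v u auv avu) (insert u D)) a b := by
            intro a ha b hb
            refine reach_mono ?_ (hconnD a ha b hb)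
            rintro x y ⟨hxy, hx, hy⟩
            exact ⟨Or.inl hxy, Finset.mem_insert_of_mem hx, Finset.mem_insert_of_mem hy⟩
          have harcu1 : restrict (twinArc B v u auv avu) (insert u D) u w₁ :=
            ⟨harc1, Finset.mem_insert_self u D, Finset.mem_insert_of_mem hw1D⟩
          have harc2u : restrict (twinArc B v u auv avu) (insert u D) w₂ u :=
            ⟨harc2, Finset.mem_insert_of_mem hw2D, Finset.mem_insert_self u D⟩
          have hconnD' : StronglyConn (twinArc B v u auv avu) (insert u D) := by
            intro a ha b hb
            rcases Finset.mem_insert.mp ha with rfl | haD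
            · rcases Finset.mem_insert.mp hb with rfl | hbD
              · exact ⟨0, rfl⟩
              · exact reach_trans ⟨1, w₁, harcu1, rfl⟩ (hliftD w₁ hw1D b hbD)
            · rcases Finset.mem_insert.mp hb with rfl | hbD
              · exact reach_trans (hliftD a haD w₂ hw2D) ⟨1, b, harc2u, rfl⟩
              · exact hliftD a haD b hbD
          have hCsub : C ⊆ insert u D := by
            intro c hcC
            by_cases hcu : c = u
            · exact hcu ▸ Finset.mem_insert_self u D
            · exact Finset.mem_insert_of_mem (hC₀D ((hC₀mem c).mpr ⟨hcu, hcC⟩))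
          have hDeq : insert u D = C :=
            hmax (insert u D) hCsub (Finset.insert_subset_insert u hDV) hconnD'
          apply Finset.Subset.antisymm
          · intro x hx
            exact (hC₀mem x).mpr ⟨fun e => huD (e ▸ hx), hDeq ▸ Finset.mem_insert_of_mem hx⟩
          · exact hC₀D
        have hdco₀ := ih C₀ hcomp₀
        have huC₀ : u ∉ C₀ := fun hh => ((hC₀mem u).mp hh).1 rfl
        have hCeq : C = insert u C₀ := by
          rw [hC₀def]
          exact (Finset.insert_erase hup).symm
        have hrel : restrict (twinArc B v u auv avu) C = twinArc (restrict B C₀) v u auv avu := by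
          funext x y
          apply propext
          constructor
          · rintro ⟨hxy, hxC, hyC⟩
            by_cases hxu : x = u
            · by_cases hyu : y = u
              · rw [hxu, hyu] at hxy
                exact absurd hxy hA'uu
              · have hxy' : twinArc B v u auv avu u y := hxu ▸ hxy
                rcases hA'u_out y hyu hxy' with ⟨hyv, ha⟩ | hh
                · exact Or.inr (Or.inl ⟨hxu, hyv, ha⟩)
                · exact Or.inr (Or.inr (Or.inr (Or.inl
                    ⟨hxu, hh, hvC₀, (hC₀mem y).mpr ⟨hyu, hyC⟩⟩)))
            · by_cases hyu : y = u
              · have hxy' : twinArc B v u auv avu x u := hyu ▸ hxy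
                rcases hA'u_in x hxu hxy' with ⟨hxv, ha⟩ | hh
                · exact Or.inr (Or.inr (Or.inl ⟨hxv, hyu, ha⟩))
                · exact Or.inr (Or.inr (Or.inr (Or.inr
                    ⟨hyu, hh, (hC₀mem x).mpr ⟨hxu, hxC⟩, hvC₀⟩)))
              · exact Or.inl ⟨(hA'base x y hxu hyu).mp hxy,
                  (hC₀mem x).mpr ⟨hxu, hxC⟩, (hC₀mem y).mpr ⟨hyu, hyC⟩⟩
          · intro hh
            simp only [twinArc, restrict] at hh
            rcases hh with ⟨hh, hx, hy⟩ | ⟨e1, e2, ha⟩ | ⟨e1, e2, ha⟩ |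
              ⟨e1, hh, _, hy⟩ | ⟨e1, hh, hx, _⟩
            · exact ⟨Or.inl hh, hC₀C hx, hC₀C hy⟩
            · exact ⟨Or.inr (Or.inl ⟨e1, e2, ha⟩), by rw [e1]; exact hup,
                by rw [e2]; exact hvC⟩
            · exact ⟨Or.inr (Or.inr (Or.inl ⟨e1, e2, ha⟩)), by rw [e1]; exact hvC,
                by rw [e2]; exact hup⟩
            · exact ⟨Or.inr (Or.inr (Or.inr (Or.inl ⟨e1, hh⟩))), by rw [e1]; exact hup,
                hC₀C hy⟩
            · exact ⟨Or.inr (Or.inr (Or.inr (Or.inr ⟨e1, hh⟩))), hC₀C hx,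
                by rw [e1]; exact hup⟩
        rw [hrel, hCeq]
        exact dco_twin hdco₀ v hvC₀ u huC₀ auv avu
      · push_neg at hex
        have hCeq : C = {u} := Finset.eq_singleton_iff_unique_mem.mpr ⟨hup, hex⟩
        rw [hCeq]
        exact dco_singleton hA'uu
    · have hcomp := comp_transfer hu hA'base hC hup
      have hrel : restrict (twinArc B v u auv avu) C = restrict B C :=
        restrict_congr fun x y hx hy =>
          hA'base x y (fun e => hup (e ▸ hx)) (fun e => hup (e ▸ hy))
      rw [hrel]
      exact ih C hcomp
  | @pendPlus W B a u ha hu hprev ih =>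
    intro C hC
    have wf := twinDH_wf hprev
    have hau : a ≠ u := fun e => hu (e ▸ ha)
    have heq : ∀ x y, x ≠ u → y ≠ u → ((B x y ∨ (x = u ∧ y = a)) ↔ B x y) := by
      intro x y hx hy
      constructor
      · rintro (hh | ⟨e, _⟩)
        · exact hh
        · exact absurd e hx
      · exact Or.inl
    by_cases hup : u ∈ C
    · obtain ⟨hne, hsub, hconn, hmax⟩ := hC
      have hnoin : ∀ x, ¬ restrict (fun x y => B x y ∨ (x = u ∧ y = a)) C x u := by
        rintro x ⟨hh | ⟨_, e⟩, _, _⟩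
        · exact hu (wf _ _ hh).2.1
        · exact hau e.symm
      have hall : ∀ w ∈ C, w = u := by
        intro w hw
        obtain ⟨n, hwalk⟩ := hconn w hw u hup
        exact walk_no_in hnoin n w hwalk
      have hCeq : C = {u} := Finset.eq_singleton_iff_unique_mem.mpr ⟨hup, hall⟩
      rw [hCeq]
      apply dco_singleton
      rintro (hh | ⟨_, e⟩)
      · exact hu (wf _ _ hh).1
      · exact hau e.symm
    · have hcomp := comp_transfer hu heq hC hup
      have hrel : restrict (fun x y => B x y ∨ (x = u ∧ y = a)) C = restrict B C :=
        restrict_congr fun x y hx hy =>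
          heq x y (fun e => hup (e ▸ hx)) (fun e => hup (e ▸ hy))
      rw [hrel]
      exact ih C hcomp
  | @pendMinus W B a u ha hu hprev ih =>
    intro C hC
    have wf := twinDH_wf hprev
    have hau : a ≠ u := fun e => hu (e ▸ ha)
    have heq : ∀ x y, x ≠ u → y ≠ u → ((B x y ∨ (x = a ∧ y = u)) ↔ B x y) := by
      intro x y hx hy
      constructor
      · rintro (hh | ⟨_, e⟩)
        · exact hh
        · exact absurd e hy
      · exact Or.inl
    by_cases hup : u ∈ C
    · obtain ⟨hne, hsub, hconn, hmax⟩ := hC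
      have hnoout : ∀ x, ¬ restrict (fun x y => B x y ∨ (x = a ∧ y = u)) C u x := by
        rintro x ⟨hh | ⟨e, _⟩, _, _⟩
        · exact hu (wf _ _ hh).1
        · exact hau e.symm
      have hall : ∀ w ∈ C, w = u := by
        intro w hw
        obtain ⟨n, hwalk⟩ := hconn u hup w hw
        exact walk_no_out hnoout n w hwalk
      have hCeq : C = {u} := Finset.eq_singleton_iff_unique_mem.mpr ⟨hup, hall⟩
      rw [hCeq]
      apply dco_singleton
      rintro (hh | ⟨e, _⟩)
      · exact hu (wf _ _ hh).1
      · exact hau e.symm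
    · have hcomp := comp_transfer hu heq hC hup
      have hrel : restrict (fun x y => B x y ∨ (x = a ∧ y = u)) C = restrict B C :=
        restrict_congr fun x y hx hy =>
          heq x y (fun e => hup (e ▸ hx)) (fun e => hup (e ▸ hy))
      rw [hrel]
      exact ih C hcomp
end

section
/- A twin-distance-hereditary digraph contains no induced directed 3-cycle (three vertices a, b, c with arcs exactly (a,b), (b,c), (c,a) among them). -/
def C3 (A : ℕ → ℕ → Prop) (a b c : ℕ) : Prop :=
  a ≠ b ∧ b ≠ c ∧ a ≠ c ∧ A a b ∧ A b c ∧ A c a ∧ ¬ A b a ∧ ¬ A c b ∧ ¬ A a c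

lemma C3.rot {A : ℕ → ℕ → Prop} {a b c : ℕ} (h : C3 A a b c) : C3 A b c a := by
  obtain ⟨h1, h2, h3, h4, h5, h6, h7, h8, h9⟩ := h
  exact ⟨h2, Ne.symm h3, Ne.symm h1, h5, h6, h4, h8, h9, h7⟩

lemma TwinDH.arcs {V : Finset ℕ} {A : ℕ → ℕ → Prop} (h : TwinDH V A) :
    ∀ x y, A x y → x ∈ V ∧ y ∈ V := by
  induction h with
  | single v => exact fun x y h => h.elim
  | union hd h1 h2 ih1 ih2 =>
      intro x y h
      rcases h with h | h
      · exact ⟨Finset.mem_union_left _ (ih1 x y h).1, Finset.mem_union_left _ (ih1 x y h).2⟩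
      · exact ⟨Finset.mem_union_right _ (ih2 x y h).1, Finset.mem_union_right _ (ih2 x y h).2⟩
  | twin v u auv avu hv hu hA ih =>
      intro x y h
      rcases h with h | ⟨rfl, rfl, _⟩ | ⟨rfl, rfl, _⟩ | ⟨rfl, h⟩ | ⟨rfl, h⟩
      · exact ⟨Finset.mem_insert_of_mem (ih x y h).1, Finset.mem_insert_of_mem (ih x y h).2⟩
      · exact ⟨Finset.mem_insert_self _ _, Finset.mem_insert_of_mem hv⟩
      · exact ⟨Finset.mem_insert_of_mem hv, Finset.mem_insert_self _ _⟩
      · exact ⟨Finset.mem_insert_self _ _, Finset.mem_insert_of_mem (ih v y h).2⟩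
      · exact ⟨Finset.mem_insert_of_mem (ih x v h).1, Finset.mem_insert_self _ _⟩
  | pendPlus a u ha hu hA ih =>
      intro x y h
      rcases h with h | ⟨rfl, rfl⟩
      · exact ⟨Finset.mem_insert_of_mem (ih x y h).1, Finset.mem_insert_of_mem (ih x y h).2⟩
      · exact ⟨Finset.mem_insert_self _ _, Finset.mem_insert_of_mem ha⟩
  | pendMinus a u ha hu hA ih =>
      intro x y h
      rcases h with h | ⟨rfl, rfl⟩
      · exact ⟨Finset.mem_insert_of_mem (ih x y h).1, Finset.mem_insert_of_mem (ih x y h).2⟩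
      · exact ⟨Finset.mem_insert_of_mem ha, Finset.mem_insert_self _ _⟩

lemma TwinDH.noC3 {V : Finset ℕ} {A : ℕ → ℕ → Prop} (h : TwinDH V A) :
    ∀ a b c, ¬ C3 A a b c := by
  induction h with
  | single v =>
      rintro a b c ⟨h1, h2, h3, h4, _⟩
      exact h4
  | union hd hA1 hA2 ih1 ih2 =>
      rename_i V₁ V₂ A₁ A₂
      rintro a b c ⟨h1, h2, h3, hab, hbc, hca, hnba, hncb, hnac⟩
      have m1 := hA1.arcs
      have m2 := hA2.arcs
      rcases hab with hab | hab
      · have hbV : b ∈ V₁ := (m1 _ _ hab).2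
        have hbc' : A₁ b c := by
          rcases hbc with h | h
          · exact h
          · exact (Finset.disjoint_left.mp hd hbV (m2 _ _ h).1).elim
        have hca' : A₁ c a := by
          rcases hca with h | h
          · exact h
          · exact (Finset.disjoint_left.mp hd (m1 _ _ hbc').2 (m2 _ _ h).1).elim
        exact ih1 a b c ⟨h1, h2, h3, hab, hbc', hca',
          fun hh => hnba (Or.inl hh), fun hh => hncb (Or.inl hh), fun hh => hnac (Or.inl hh)⟩
      · have hbV : b ∈ V₂ := (m2 _ _ hab).2
        have hbc' : A₂ b c := by
          rcases hbc with h | h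
          · exact (Finset.disjoint_right.mp hd hbV (m1 _ _ h).1).elim
          · exact h
        have hca' : A₂ c a := by
          rcases hca with h | h
          · exact (Finset.disjoint_right.mp hd (m2 _ _ hbc').2 (m1 _ _ h).1).elim
          · exact h
        exact ih2 a b c ⟨h1, h2, h3, hab, hbc', hca',
          fun hh => hnba (Or.inr hh), fun hh => hncb (Or.inr hh), fun hh => hnac (Or.inr hh)⟩
  | twin v u auv avu hv hu hA ih =>
      rename_i V A
      have hAV := hA.arcs
      have huv : u ≠ v := fun e => hu (e ▸ hv)
      have hkey : ∀ a b c, a = u → ¬ C3 (twinArc A v u auv avu) a b c := by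
        rintro a b c rfl ⟨h1, h2, h3, hab, hbc, hca, hnba, hncb, hnac⟩
        have hab' : (b = v ∧ auv) ∨ A v b := by
          rcases hab with h | ⟨_, rfl, hx⟩ | ⟨h, _, _⟩ | ⟨_, h⟩ | ⟨h, _⟩
          · exact absurd (hAV _ _ h).1 hu
          · exact Or.inl ⟨rfl, hx⟩
          · exact absurd h huv
          · exact Or.inr h
          · exact absurd h.symm h1
        have hbc' : A b c := by
          rcases hbc with h | ⟨h, _, _⟩ | ⟨_, h, _⟩ | ⟨h, _⟩ | ⟨h, _⟩
          · exact h
          · exact absurd h.symm h1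
          · exact absurd h.symm h3
          · exact absurd h.symm h1
          · exact absurd h.symm h3
        have hca' : (c = v ∧ avu) ∨ A c v := by
          rcases hca with h | ⟨h, _, _⟩ | ⟨rfl, _, hx⟩ | ⟨h, _⟩ | ⟨_, h⟩
          · exact absurd (hAV _ _ h).2 hu
          · exact absurd h.symm h3
          · exact Or.inl ⟨rfl, hx⟩
          · exact absurd h.symm h3
          · exact Or.inr h
        have hnba' : ¬ ((b = v ∧ avu) ∨ A b v) := by
          rintro (⟨rfl, hx⟩ | hx)
          · exact hnba (Or.inr (Or.inr (Or.inl ⟨rfl, rfl, hx⟩)))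
          · exact hnba (Or.inr (Or.inr (Or.inr (Or.inr ⟨rfl, hx⟩))))
        have hncb' : ¬ A c b := fun hh => hncb (Or.inl hh)
        have hnac' : ¬ ((c = v ∧ auv) ∨ A v c) := by
          rintro (⟨rfl, hx⟩ | hx)
          · exact hnac (Or.inr (Or.inl ⟨rfl, rfl, hx⟩))
          · exact hnac (Or.inr (Or.inr (Or.inr (Or.inl ⟨rfl, hx⟩))))
        by_cases hbv : b = v
        · subst hbv
          have hnAvv : ¬ A b b := fun hh => hnba' (Or.inr hh)
          have hAcb : A c b := by
            rcases hca' with ⟨h, _⟩ | h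
            · exact absurd h.symm h2
            · exact h
          exact hncb' hAcb
        by_cases hcv : c = v
        · subst hcv
          have hnAvv : ¬ A c c := fun hh => hnac' (Or.inr hh)
          have hAvb : A c b := by
            rcases hab' with ⟨h, _⟩ | h
            · exact absurd h hbv
            · exact h
          exact hncb' hAvb
        · have hAvb : A v b := by
            rcases hab' with ⟨h, _⟩ | h
            · exact absurd h hbv
            · exact h
          have hAcv : A c v := by
            rcases hca' with ⟨h, _⟩ | h
            · exact absurd h hcv
            · exact h
          exact ih v b c ⟨fun e => hbv e.symm, h2, fun e => hcv e.symm, hAvb, hbc', hAcv,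
            fun hh => hnba' (Or.inr hh), hncb', fun hh => hnac' (Or.inr hh)⟩
      rintro a b c hc
      by_cases ha : a = u
      · exact hkey a b c ha hc
      by_cases hb : b = u
      · exact hkey b c a hb hc.rot
      by_cases hcu : c = u
      · exact hkey c a b hcu hc.rot.rot
      · have red : ∀ x y, x ≠ u → y ≠ u → twinArc A v u auv avu x y → A x y := by
          rintro x y hx hy (h | ⟨h, _, _⟩ | ⟨_, h, _⟩ | ⟨h, _⟩ | ⟨h, _⟩)
          · exact h
          · exact absurd h hx
          · exact absurd h hy
          · exact absurd h hx
          · exact absurd h hy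
        obtain ⟨h1, h2, h3, hab, hbc, hca, hnba, hncb, hnac⟩ := hc
        exact ih a b c ⟨h1, h2, h3, red _ _ ha hb hab, red _ _ hb hcu hbc, red _ _ hcu ha hca,
          fun hh => hnba (Or.inl hh), fun hh => hncb (Or.inl hh), fun hh => hnac (Or.inl hh)⟩
  | pendPlus a₀ u ha₀ hu hA ih =>
      rename_i V A
      have hAV := hA.arcs
      have hkey : ∀ a b c, a = u →
          ¬ C3 (fun x y => A x y ∨ (x = u ∧ y = a₀)) a b c := by
        rintro a b c rfl ⟨h1, h2, h3, hab, hbc, hca, hnba, hncb, hnac⟩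
        rcases hca with h | ⟨rfl, _⟩
        · exact hu (hAV _ _ h).2
        · exact h3 rfl
      rintro a b c hc
      by_cases ha : a = u
      · exact hkey a b c ha hc
      by_cases hb : b = u
      · exact hkey b c a hb hc.rot
      by_cases hcu : c = u
      · exact hkey c a b hcu hc.rot.rot
      · have red : ∀ x y, x ≠ u → (A x y ∨ (x = u ∧ y = a₀)) → A x y := by
          rintro x y hx (h | ⟨h, _⟩)
          · exact h
          · exact absurd h hx
        obtain ⟨h1, h2, h3, hab, hbc, hca, hnba, hncb, hnac⟩ := hc
        exact ih a b c ⟨h1, h2, h3, red _ _ ha hab, red _ _ hb hbc, red _ _ hcu hca,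
          fun hh => hnba (Or.inl hh), fun hh => hncb (Or.inl hh), fun hh => hnac (Or.inl hh)⟩
  | pendMinus a₀ u ha₀ hu hA ih =>
      rename_i V A
      have hAV := hA.arcs
      have hua : u ≠ a₀ := fun e => hu (e ▸ ha₀)
      have hkey : ∀ a b c, a = u →
          ¬ C3 (fun x y => A x y ∨ (x = a₀ ∧ y = u)) a b c := by
        rintro a b c rfl ⟨h1, h2, h3, hab, hbc, hca, hnba, hncb, hnac⟩
        rcases hab with h | ⟨h, _⟩
        · exact hu (hAV _ _ h).1
        · exact hua h
      rintro a b c hc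
      by_cases ha : a = u
      · exact hkey a b c ha hc
      by_cases hb : b = u
      · exact hkey b c a hb hc.rot
      by_cases hcu : c = u
      · exact hkey c a b hcu hc.rot.rot
      · have red : ∀ x y, y ≠ u → (A x y ∨ (x = a₀ ∧ y = u)) → A x y := by
          rintro x y hy (h | ⟨_, h⟩)
          · exact h
          · exact absurd h hy
        obtain ⟨h1, h2, h3, hab, hbc, hca, hnba, hncb, hnac⟩ := hc
        exact ih a b c ⟨h1, h2, h3, red _ _ hb hab, red _ _ hcu hbc, red _ _ ha hca,
          fun hh => hnba (Or.inl hh), fun hh => hncb (Or.inl hh), fun hh => hnac (Or.inl hh)⟩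

theorem stmt_9 (V : Finset ℕ) (A : ℕ → ℕ → Prop) (h : TwinDH V A) :
    ¬ ∃ a b c : ℕ, a ∈ V ∧ b ∈ V ∧ c ∈ V ∧ a ≠ b ∧ b ≠ c ∧ a ≠ c ∧
      A a b ∧ A b c ∧ A c a ∧ ¬ A b a ∧ ¬ A c b ∧ ¬ A a c := by
  rintro ⟨a, b, c, _, _, _, h1, h2, h3, h4, h5, h6, h7, h8, h9⟩
  exact h.noC3 a b c ⟨h1, h2, h3, h4, h5, h6, h7, h8, h9⟩
end

section
/- Every twin-distance-hereditary digraph is an extended directed co-graph. -/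
lemma ExtDCo_congr {V V' : Finset ℕ} {A A' : ℕ → ℕ → Prop} (h : ExtDCo V A)
    (hV : V = V') (he : ∀ x y, A x y ↔ A' x y) : ExtDCo V' A' := by
  have hA : A = A' := funext fun x => funext fun y => propext (he x y)
  exact hV ▸ hA ▸ h

lemma ExtDCo_sub {V : Finset ℕ} {A : ℕ → ℕ → Prop} (h : ExtDCo V A) :
    ∀ x y, A x y → x ∈ V ∧ y ∈ V := by
  induction h with
  | single v => intro x y hxy; exact hxy.elim
  | union d h1 h2 ih1 ih2 =>
      intro x y hxy; simp only [Finset.mem_union]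
      rcases hxy with h | h
      · exact ⟨Or.inl (ih1 x y h).1, Or.inl (ih1 x y h).2⟩
      · exact ⟨Or.inr (ih2 x y h).1, Or.inr (ih2 x y h).2⟩
  | series d h1 h2 ih1 ih2 =>
      intro x y hxy; simp only [Finset.mem_union]
      rcases hxy with h | h | ⟨h1', h2'⟩ | ⟨h1', h2'⟩
      · exact ⟨Or.inl (ih1 x y h).1, Or.inl (ih1 x y h).2⟩
      · exact ⟨Or.inr (ih2 x y h).1, Or.inr (ih2 x y h).2⟩
      · exact ⟨Or.inl h1', Or.inr h2'⟩
      · exact ⟨Or.inr h1', Or.inl h2'⟩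
  | order d h1 h2 ih1 ih2 =>
      intro x y hxy; simp only [Finset.mem_union]
      rcases hxy with h | h | ⟨h1', h2'⟩
      · exact ⟨Or.inl (ih1 x y h).1, Or.inl (ih1 x y h).2⟩
      · exact ⟨Or.inr (ih2 x y h).1, Or.inr (ih2 x y h).2⟩
      · exact ⟨Or.inl h1', Or.inr h2'⟩
  | dUnion R d h1 h2 ih1 ih2 =>
      intro x y hxy; simp only [Finset.mem_union]
      rcases hxy with h | h | ⟨h1', h2', _⟩
      · exact ⟨Or.inl (ih1 x y h).1, Or.inl (ih1 x y h).2⟩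
      · exact ⟨Or.inr (ih2 x y h).1, Or.inr (ih2 x y h).2⟩
      · exact ⟨Or.inl h1', Or.inr h2'⟩

lemma ExtDCo_twin {V : Finset ℕ} {A : ℕ → ℕ → Prop} (h : ExtDCo V A) :
    ∀ v u (auv avu : Prop), v ∈ V → u ∉ V →
      ExtDCo (insert u V) (twinArc A v u auv avu) := by
  induction h with
  | single w =>
      intro v u auv avu hv hu
      rw [Finset.mem_singleton] at hv; subst hv
      have hne : u ≠ v := by simpa [Finset.mem_singleton] using hu
      have hd : Disjoint ({u} : Finset ℕ) {v} := by simp [hne, hne.symm]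
      by_cases hauv : auv <;> by_cases havu : avu
      · exact ExtDCo_congr (ExtDCo.series hd (ExtDCo.single u) (ExtDCo.single v))
          (by rw [Finset.insert_eq]) (by intro x y; simp [twinArc]; itauto!)
      · exact ExtDCo_congr (ExtDCo.order hd (ExtDCo.single u) (ExtDCo.single v))
          (by rw [Finset.insert_eq]) (by intro x y; simp [twinArc]; itauto!)
      · exact ExtDCo_congr (ExtDCo.order hd.symm (ExtDCo.single v) (ExtDCo.single u))
          (by rw [Finset.union_comm]; rw [Finset.insert_eq]) (by intro x y; simp [twinArc]; itauto!)
      · exact ExtDCo_congr (ExtDCo.union hd (ExtDCo.single u) (ExtDCo.single v))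
          (by rw [Finset.insert_eq]) (by intro x y; simp [twinArc]; itauto!)
  | @union V₁ V₂ A₁ A₂ d h1 h2 ih1 ih2 =>
      intro v u auv avu hv hu
      rcases Finset.mem_union.1 hv with hv1 | hv2
      · have hu1 : u ∉ V₁ := fun h' => hu (Finset.mem_union_left _ h')
        have hu2 : u ∉ V₂ := fun h' => hu (Finset.mem_union_right _ h')
        have hv2' : v ∉ V₂ := Finset.disjoint_left.1 d hv1
        have h2v : ∀ y, ¬ A₂ v y := fun y hy => hv2' (ExtDCo_sub h2 v y hy).1
        have h2v' : ∀ x, ¬ A₂ x v := fun x hx => hv2' (ExtDCo_sub h2 x v hx).2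
        have hd : Disjoint (insert u V₁) V₂ := by
          rw [Finset.disjoint_insert_left]; exact ⟨hu2, d⟩
        exact ExtDCo_congr (ExtDCo.union hd (ih1 v u auv avu hv1 hu1) h2)
          (by rw [Finset.insert_union])
          (by intro x y; simp only [twinArc]
              have := h2v y; have := h2v' x; itauto!)
      · have hu1 : u ∉ V₁ := fun h' => hu (Finset.mem_union_left _ h')
        have hu2 : u ∉ V₂ := fun h' => hu (Finset.mem_union_right _ h')
        have hv1' : v ∉ V₁ := Finset.disjoint_right.1 d hv2
        have h1v : ∀ y, ¬ A₁ v y := fun y hy => hv1' (ExtDCo_sub h1 v y hy).1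
        have h1v' : ∀ x, ¬ A₁ x v := fun x hx => hv1' (ExtDCo_sub h1 x v hx).2
        have hd : Disjoint V₁ (insert u V₂) := by
          rw [Finset.disjoint_insert_right]; exact ⟨hu1, d⟩
        exact ExtDCo_congr (ExtDCo.union hd h1 (ih2 v u auv avu hv2 hu2))
          (by rw [Finset.union_insert])
          (by intro x y; simp only [twinArc]
              have := h1v y; have := h1v' x; itauto!)
  | @series V₁ V₂ A₁ A₂ d h1 h2 ih1 ih2 =>
      intro v u auv avu hv hu
      rcases Finset.mem_union.1 hv with hv1 | hv2
      · have hu1 : u ∉ V₁ := fun h' => hu (Finset.mem_union_left _ h')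
        have hu2 : u ∉ V₂ := fun h' => hu (Finset.mem_union_right _ h')
        have hv2' : v ∉ V₂ := Finset.disjoint_left.1 d hv1
        have h2v : ∀ y, ¬ A₂ v y := fun y hy => hv2' (ExtDCo_sub h2 v y hy).1
        have h2v' : ∀ x, ¬ A₂ x v := fun x hx => hv2' (ExtDCo_sub h2 x v hx).2
        have hd : Disjoint (insert u V₁) V₂ := by
          rw [Finset.disjoint_insert_left]; exact ⟨hu2, d⟩
        exact ExtDCo_congr (ExtDCo.series hd (ih1 v u auv avu hv1 hu1) h2)
          (by rw [Finset.insert_union])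
          (by intro x y; simp only [twinArc, Finset.mem_insert]
              have := h2v y; have := h2v' x; itauto!)
      · have hu1 : u ∉ V₁ := fun h' => hu (Finset.mem_union_left _ h')
        have hu2 : u ∉ V₂ := fun h' => hu (Finset.mem_union_right _ h')
        have hv1' : v ∉ V₁ := Finset.disjoint_right.1 d hv2
        have h1v : ∀ y, ¬ A₁ v y := fun y hy => hv1' (ExtDCo_sub h1 v y hy).1
        have h1v' : ∀ x, ¬ A₁ x v := fun x hx => hv1' (ExtDCo_sub h1 x v hx).2
        have hd : Disjoint V₁ (insert u V₂) := by
          rw [Finset.disjoint_insert_right]; exact ⟨hu1, d⟩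
        exact ExtDCo_congr (ExtDCo.series hd h1 (ih2 v u auv avu hv2 hu2))
          (by rw [Finset.union_insert])
          (by intro x y; simp only [twinArc, Finset.mem_insert]
              have := h1v y; have := h1v' x; itauto!)
  | @order V₁ V₂ A₁ A₂ d h1 h2 ih1 ih2 =>
      intro v u auv avu hv hu
      rcases Finset.mem_union.1 hv with hv1 | hv2
      · have hu1 : u ∉ V₁ := fun h' => hu (Finset.mem_union_left _ h')
        have hu2 : u ∉ V₂ := fun h' => hu (Finset.mem_union_right _ h')
        have hv2' : v ∉ V₂ := Finset.disjoint_left.1 d hv1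
        have h2v : ∀ y, ¬ A₂ v y := fun y hy => hv2' (ExtDCo_sub h2 v y hy).1
        have h2v' : ∀ x, ¬ A₂ x v := fun x hx => hv2' (ExtDCo_sub h2 x v hx).2
        have hd : Disjoint (insert u V₁) V₂ := by
          rw [Finset.disjoint_insert_left]; exact ⟨hu2, d⟩
        exact ExtDCo_congr (ExtDCo.order hd (ih1 v u auv avu hv1 hu1) h2)
          (by rw [Finset.insert_union])
          (by intro x y; simp only [twinArc, Finset.mem_insert]
              have := h2v y; have := h2v' x; itauto!)
      · have hu1 : u ∉ V₁ := fun h' => hu (Finset.mem_union_left _ h')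
        have hu2 : u ∉ V₂ := fun h' => hu (Finset.mem_union_right _ h')
        have hv1' : v ∉ V₁ := Finset.disjoint_right.1 d hv2
        have h1v : ∀ y, ¬ A₁ v y := fun y hy => hv1' (ExtDCo_sub h1 v y hy).1
        have h1v' : ∀ x, ¬ A₁ x v := fun x hx => hv1' (ExtDCo_sub h1 x v hx).2
        have hd : Disjoint V₁ (insert u V₂) := by
          rw [Finset.disjoint_insert_right]; exact ⟨hu1, d⟩
        exact ExtDCo_congr (ExtDCo.order hd h1 (ih2 v u auv avu hv2 hu2))
          (by rw [Finset.union_insert])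
          (by intro x y; simp only [twinArc, Finset.mem_insert]
              have := h1v y; have := h1v' x; itauto!)
  | @dUnion V₁ V₂ A₁ A₂ R d h1 h2 ih1 ih2 =>
      intro v u auv avu hv hu
      rcases Finset.mem_union.1 hv with hv1 | hv2
      · have hu1 : u ∉ V₁ := fun h' => hu (Finset.mem_union_left _ h')
        have hu2 : u ∉ V₂ := fun h' => hu (Finset.mem_union_right _ h')
        have hv2' : v ∉ V₂ := Finset.disjoint_left.1 d hv1
        have h2v : ∀ y, ¬ A₂ v y := fun y hy => hv2' (ExtDCo_sub h2 v y hy).1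
        have h2v' : ∀ x, ¬ A₂ x v := fun x hx => hv2' (ExtDCo_sub h2 x v hx).2
        have hd : Disjoint (insert u V₁) V₂ := by
          rw [Finset.disjoint_insert_left]; exact ⟨hu2, d⟩
        exact ExtDCo_congr
          (ExtDCo.dUnion (fun x y => (x = u ∧ R v y) ∨ (x ≠ u ∧ R x y)) hd
            (ih1 v u auv avu hv1 hu1) h2)
          (by rw [Finset.insert_union])
          (by intro x y; simp only [twinArc, Finset.mem_insert]
              have := h2v y; have := h2v' x
              have hx1 : x ∈ V₁ → x ≠ u := fun h' he => hu1 (he ▸ h')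
              itauto!)
      · have hu1 : u ∉ V₁ := fun h' => hu (Finset.mem_union_left _ h')
        have hu2 : u ∉ V₂ := fun h' => hu (Finset.mem_union_right _ h')
        have hv1' : v ∉ V₁ := Finset.disjoint_right.1 d hv2
        have h1v : ∀ y, ¬ A₁ v y := fun y hy => hv1' (ExtDCo_sub h1 v y hy).1
        have h1v' : ∀ x, ¬ A₁ x v := fun x hx => hv1' (ExtDCo_sub h1 x v hx).2
        have hd : Disjoint V₁ (insert u V₂) := by
          rw [Finset.disjoint_insert_right]; exact ⟨hu1, d⟩
        exact ExtDCo_congr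
          (ExtDCo.dUnion (fun x y => (y = u ∧ R x v) ∨ (y ≠ u ∧ R x y)) hd
            h1 (ih2 v u auv avu hv2 hu2))
          (by rw [Finset.union_insert])
          (by intro x y; simp only [twinArc, Finset.mem_insert]
              have := h1v y; have := h1v' x
              have hy2 : y ∈ V₂ → y ≠ u := fun h' he => hu2 (he ▸ h')
              itauto!)

lemma TwinDH_to_ExtDCo {W : Finset ℕ} {B : ℕ → ℕ → Prop} (h : TwinDH W B) :
    ExtDCo W B := by
  induction h with
  | single v => exact ExtDCo.single v
  | union d h1 h2 ih1 ih2 => exact ExtDCo.union d ih1 ih2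
  | twin v u auv avu hv hu h ih => exact ExtDCo_twin ih v u auv avu hv hu
  | @pendPlus V A a u ha hu h ih =>
      have hd : Disjoint ({u} : Finset ℕ) V := by simpa using hu
      exact ExtDCo_congr (ExtDCo.dUnion (fun _ y => y = a) hd (ExtDCo.single u) ih)
        (by rw [← Finset.insert_eq])
        (by intro x y; simp only [Finset.mem_singleton]; constructor
            · rintro (h' | h' | ⟨hx, hy, rfl⟩)
              · exact h'.elim
              · exact Or.inl h'
              · exact Or.inr ⟨hx, rfl⟩
            · rintro (h' | ⟨rfl, rfl⟩)
              · exact Or.inr (Or.inl h')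
              · exact Or.inr (Or.inr ⟨rfl, ha, rfl⟩))
  | @pendMinus V A a u ha hu h ih =>
      have hd : Disjoint V ({u} : Finset ℕ) := by simpa using hu
      exact ExtDCo_congr (ExtDCo.dUnion (fun x _ => x = a) hd ih (ExtDCo.single u))
        (by rw [Finset.union_comm, ← Finset.insert_eq])
        (by intro x y; simp only [Finset.mem_singleton]; constructor
            · rintro (h' | h' | ⟨hx, rfl, rfl⟩)
              · exact Or.inl h'
              · exact h'.elim
              · exact Or.inr ⟨rfl, rfl⟩
            · rintro (h' | ⟨rfl, rfl⟩)
              · exact Or.inl h'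
              · exact Or.inr (Or.inr ⟨ha, rfl, rfl⟩))

theorem stmt_10 (V : Finset ℕ) (A : ℕ → ℕ → Prop) (h : TwinDH V A) :
    ExtDCo V A := TwinDH_to_ExtDCo h
end

section
/- Every twin-distance-hereditary digraph has directed clique-width at most 3. -/
section Aux

/-- Restricted clique-width 3 expressions where label `2` is a "dead" label:
vertices are created with labels ≠ 2, arc additions never involve label 2,
and label 2 is never relabeled (but one may relabel *into* 2). -/
inductive Good : Finset ℕ → (ℕ → ℕ → Prop) → (ℕ → Fin 3) → Prop
  | vertex (v : ℕ) (a : Fin 3) : a ≠ 2 → Good {v} (fun _ _ => False) (fun _ => a)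
  | union {V₁ V₂ : Finset ℕ} {A₁ A₂ : ℕ → ℕ → Prop} {f₁ f₂ : ℕ → Fin 3} :
      Disjoint V₁ V₂ → Good V₁ A₁ f₁ → Good V₂ A₂ f₂ →
      Good (V₁ ∪ V₂) (fun x y => A₁ x y ∨ A₂ x y)
        (fun x => if x ∈ V₁ then f₁ x else f₂ x)
  | addArcs {V : Finset ℕ} {A : ℕ → ℕ → Prop} {f : ℕ → Fin 3} (a b : Fin 3) :
      a ≠ b → a ≠ 2 → b ≠ 2 → Good V A f →
      Good V (fun x y => A x y ∨ (x ∈ V ∧ y ∈ V ∧ f x = a ∧ f y = b)) f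
  | relabel {V : Finset ℕ} {A : ℕ → ℕ → Prop} {f : ℕ → Fin 3} (a b : Fin 3) :
      a ≠ 2 → Good V A f →
      Good V A (fun x => if f x = a then b else f x)

lemma Good.toCW {V A f} (h : Good V A f) : CW 3 V A f := by
  induction h with
  | vertex v a _ => exact CW.vertex v a
  | union hd _ _ ih1 ih2 => exact CW.union hd ih1 ih2
  | addArcs a b hab _ _ _ ih => exact CW.addArcs a b hab ih
  | relabel a b _ _ ih => exact CW.relabel a b ih

lemma Good.cast {V V' A A' f f'} (h : Good V A f) (hV : V = V')
    (hA : ∀ x y, A x y ↔ A' x y) (hf : ∀ x, f x = f' x) : Good V' A' f' := by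
  obtain rfl : A = A' := funext fun x => funext fun y => propext (hA x y)
  obtain rfl : f = f' := funext hf
  exact hV ▸ h

lemma Good.mem_of_arc {V A f} (h : Good V A f) : ∀ x y, A x y → x ∈ V ∧ y ∈ V := by
  induction h with
  | vertex v a _ => exact fun x y h => h.elim
  | union hd h1 h2 ih1 ih2 =>
      rintro x y (h | h)
      · exact ⟨Finset.mem_union_left _ ((ih1 x y h).1), Finset.mem_union_left _ ((ih1 x y h).2)⟩
      · exact ⟨Finset.mem_union_right _ ((ih2 x y h).1), Finset.mem_union_right _ ((ih2 x y h).2)⟩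
  | addArcs a b _ _ _ _ ih =>
      rintro x y (h | ⟨hx, hy, -⟩)
      · exact ih x y h
      · exact ⟨hx, hy⟩
  | relabel a b _ _ ih => exact ih

/-- the "other" live label -/
def oth (a : Fin 3) : Fin 3 := if a = 0 then 1 else 0

lemma oth_ne (a : Fin 3) (ha : a ≠ 2) : oth a ≠ a ∧ oth a ≠ 2 := by
  fin_cases a <;> simp_all [oth]

/-- a two-vertex gadget with arcs among `u, w` as prescribed by booleans. -/
lemma pair_rel (w u : ℕ) (hne : u ≠ w) (a : Fin 3) (ha : a ≠ 2) (buw bwu : Bool) :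
    Good (insert u {w}) (fun x y => (x = u ∧ y = w ∧ buw = true) ∨ (x = w ∧ y = u ∧ bwu = true))
      (fun _ => a) := by
  obtain ⟨hm1, hm2⟩ := oth_ne a ha
  have hdisj : Disjoint ({w} : Finset ℕ) {u} := by simp [hne.symm]
  have hbase := Good.union hdisj (Good.vertex w a ha) (Good.vertex u (oth a) hm2)
  have hVeq : ({w} : Finset ℕ) ∪ {u} = insert u {w} := by ext x; simp [or_comm]
  -- label facts
  have lw : (if w ∈ ({w} : Finset ℕ) then a else oth a) = a := by simp
  have lu : (if u ∈ ({w} : Finset ℕ) then a else oth a) = oth a := by simp [hne]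
  cases buw <;> cases bwu
  · -- no arcs
    refine (hbase.relabel (oth a) a hm2).cast hVeq (by tauto) ?_
    intro x; by_cases hx : x ∈ ({w} : Finset ℕ) <;> simp [hx, hm1]
  · -- only w → u
    refine ((hbase.addArcs a (oth a) (Ne.symm hm1) ha hm2).relabel (oth a) a hm2).cast hVeq ?_ ?_
    · intro x y
      constructor
      · rintro ((h | h) | ⟨hx, hy, hfx, hfy⟩)
        · exact h.elim
        · exact h.elim
        · right
          have hxw : x = w := by
            rcases Finset.mem_union.1 hx with h | h
            · exact Finset.mem_singleton.1 h
            · exfalso; rw [Finset.mem_singleton.1 h] at hfx; rw [lu] at hfx; exact hm1 hfx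
          have hyu : y = u := by
            rcases Finset.mem_union.1 hy with h | h
            · exfalso; rw [Finset.mem_singleton.1 h] at hfy; rw [lw] at hfy; exact hm1 hfy.symm
            · exact Finset.mem_singleton.1 h
          exact ⟨hxw, hyu, rfl⟩
      · rintro (⟨-, -, h⟩ | ⟨hx, hy, -⟩)
        · exact absurd h (by simp)
        · subst hx; subst hy
          exact Or.inr ⟨by simp, by simp, lw, lu⟩
    · intro x; by_cases hx : x ∈ ({w} : Finset ℕ) <;> simp [hx, hm1]
  · -- only u → w
    refine ((hbase.addArcs (oth a) a hm1 hm2 ha).relabel (oth a) a hm2).cast hVeq ?_ ?_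
    · intro x y
      constructor
      · rintro ((h | h) | ⟨hx, hy, hfx, hfy⟩)
        · exact h.elim
        · exact h.elim
        · left
          have hxu : x = u := by
            rcases Finset.mem_union.1 hx with h | h
            · exfalso; rw [Finset.mem_singleton.1 h] at hfx; rw [lw] at hfx; exact hm1 hfx.symm
            · exact Finset.mem_singleton.1 h
          have hyw : y = w := by
            rcases Finset.mem_union.1 hy with h | h
            · exact Finset.mem_singleton.1 h
            · exfalso; rw [Finset.mem_singleton.1 h] at hfy; rw [lu] at hfy; exact hm1 hfy
          exact ⟨hxu, hyw, rfl⟩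
      · rintro (⟨hx, hy, -⟩ | ⟨-, -, h⟩)
        · subst hx; subst hy
          exact Or.inr ⟨by simp, by simp, lu, lw⟩
        · exact absurd h (by simp)
    · intro x; by_cases hx : x ∈ ({w} : Finset ℕ) <;> simp [hx, hm1]
  · -- both
    refine (((hbase.addArcs (oth a) a hm1 hm2 ha).addArcs a (oth a) (Ne.symm hm1) ha hm2).relabel
      (oth a) a hm2).cast hVeq ?_ ?_
    · intro x y
      constructor
      · rintro ((((h | h) | ⟨hx, hy, hfx, hfy⟩) | ⟨hx, hy, hfx, hfy⟩))
        · exact h.elim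
        · exact h.elim
        · left
          have hxu : x = u := by
            rcases Finset.mem_union.1 hx with h | h
            · exfalso; rw [Finset.mem_singleton.1 h] at hfx; rw [lw] at hfx; exact hm1 hfx.symm
            · exact Finset.mem_singleton.1 h
          have hyw : y = w := by
            rcases Finset.mem_union.1 hy with h | h
            · exact Finset.mem_singleton.1 h
            · exfalso; rw [Finset.mem_singleton.1 h] at hfy; rw [lu] at hfy; exact hm1 hfy
          exact ⟨hxu, hyw, rfl⟩
        · right
          have hxw : x = w := by
            rcases Finset.mem_union.1 hx with h | h
            · exact Finset.mem_singleton.1 h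
            · exfalso; rw [Finset.mem_singleton.1 h] at hfx; rw [lu] at hfx; exact hm1 hfx
          have hyu : y = u := by
            rcases Finset.mem_union.1 hy with h | h
            · exfalso; rw [Finset.mem_singleton.1 h] at hfy; rw [lw] at hfy; exact hm1 hfy.symm
            · exact Finset.mem_singleton.1 h
          exact ⟨hxw, hyu, rfl⟩
      · rintro (⟨hx, hy, -⟩ | ⟨hx, hy, -⟩)
        · subst hx; subst hy
          exact Or.inl (Or.inr ⟨by simp, by simp, lu, lw⟩)
        · subst hx; subst hy
          exact Or.inr ⟨by simp, by simp, lw, lu⟩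
    · intro x; by_cases hx : x ∈ ({w} : Finset ℕ) <;> simp [hx, hm1]

end Aux
section Aux2

lemma pend_pair (w u : ℕ) (hne : u ≠ w) (ℓ : Fin 3) (hℓ : ℓ ≠ 2) (dir : Bool) :
    Good (insert u {w})
      (fun x y => (dir = true ∧ x = u ∧ y = w) ∨ (dir = false ∧ x = w ∧ y = u))
      (fun x => if x = w then ℓ else 2) := by
  obtain ⟨hm1, hm2⟩ := oth_ne ℓ hℓ
  have hdisj : Disjoint ({w} : Finset ℕ) {u} := by simp [hne.symm]
  have hbase := Good.union hdisj (Good.vertex w ℓ hℓ) (Good.vertex u (oth ℓ) hm2)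
  have hVeq : ({w} : Finset ℕ) ∪ {u} = insert u {w} := by ext x; simp [or_comm]
  have lw : (if w ∈ ({w} : Finset ℕ) then ℓ else oth ℓ) = ℓ := by simp
  have lu : (if u ∈ ({w} : Finset ℕ) then ℓ else oth ℓ) = oth ℓ := by simp [hne]
  cases dir
  · -- arc w → u
    refine ((hbase.addArcs ℓ (oth ℓ) (Ne.symm hm1) hℓ hm2).relabel (oth ℓ) 2 hm2).cast hVeq ?_ ?_
    · intro x y
      constructor
      · rintro ((h | h) | ⟨hx, hy, hfx, hfy⟩)
        · exact h.elim
        · exact h.elim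
        · right
          have hxw : x = w := by
            rcases Finset.mem_union.1 hx with h | h
            · exact Finset.mem_singleton.1 h
            · exfalso; rw [Finset.mem_singleton.1 h] at hfx; rw [lu] at hfx; exact hm1 hfx
          have hyu : y = u := by
            rcases Finset.mem_union.1 hy with h | h
            · exfalso; rw [Finset.mem_singleton.1 h] at hfy; rw [lw] at hfy; exact hm1 hfy.symm
            · exact Finset.mem_singleton.1 h
          exact ⟨rfl, hxw, hyu⟩
      · rintro (⟨h, -⟩ | ⟨-, hx, hy⟩)
        · exact absurd h (by simp)
        · subst hx; subst hy
          exact Or.inr ⟨by simp, by simp, lw, lu⟩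
    · intro x
      by_cases hx : x = w
      · subst hx; simp [hm1.symm]
      · have : x ∉ ({w} : Finset ℕ) := by simp [hx]
        simp [this, hx]
  · -- arc u → w
    refine ((hbase.addArcs (oth ℓ) ℓ hm1 hm2 hℓ).relabel (oth ℓ) 2 hm2).cast hVeq ?_ ?_
    · intro x y
      constructor
      · rintro ((h | h) | ⟨hx, hy, hfx, hfy⟩)
        · exact h.elim
        · exact h.elim
        · left
          have hxu : x = u := by
            rcases Finset.mem_union.1 hx with h | h
            · exfalso; rw [Finset.mem_singleton.1 h] at hfx; rw [lw] at hfx; exact hm1 hfx.symm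
            · exact Finset.mem_singleton.1 h
          have hyw : y = w := by
            rcases Finset.mem_union.1 hy with h | h
            · exact Finset.mem_singleton.1 h
            · exfalso; rw [Finset.mem_singleton.1 h] at hfy; rw [lu] at hfy; exact hm1 hfy
          exact ⟨rfl, hxu, hyw⟩
      · rintro (⟨-, hx, hy⟩ | ⟨h, -⟩)
        · subst hx; subst hy
          exact Or.inr ⟨by simp, by simp, lu, lw⟩
        · exact absurd h (by simp)
    · intro x
      by_cases hx : x = w
      · subst hx; simp [hm1.symm]
      · have : x ∉ ({w} : Finset ℕ) := by simp [hx]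
        simp [this, hx]

set_option maxHeartbeats 2000000 in
lemma twin_subst (v u : ℕ) (auv avu : Prop) {V : Finset ℕ} {A : ℕ → ℕ → Prop} {f : ℕ → Fin 3}
    (h : Good V A f) :
    v ∈ V → u ∉ V →
    ∃ f', Good (insert u V) (twinArc A v u auv avu) f' ∧
      ∀ x ∈ insert u V, f' x = if x = u then f v else f x := by
  induction h with
  | vertex w a ha =>
    intro hv hu
    have hvw : v = w := Finset.mem_singleton.1 hv
    subst hvw
    have hne : u ≠ v := fun h => hu (h ▸ Finset.mem_singleton_self v)
    refine ⟨fun _ => a, ?_, by intro x hx; simp⟩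
    by_cases h1 : auv <;> by_cases h2 : avu
    · exact (pair_rel v u hne a ha true true).cast rfl
        (by intro x y; simp [twinArc]; tauto) (fun _ => rfl)
    · exact (pair_rel v u hne a ha true false).cast rfl
        (by intro x y; simp [twinArc]; tauto) (fun _ => rfl)
    · exact (pair_rel v u hne a ha false true).cast rfl
        (by intro x y; simp [twinArc]; tauto) (fun _ => rfl)
    · exact (pair_rel v u hne a ha false false).cast rfl
        (by intro x y; simp [twinArc]; tauto) (fun _ => rfl)
  | union hd h1 h2 ih1 ih2 =>
    rename_i V₁ V₂ A₁ A₂ f₁ f₂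
    intro hv hu
    have hu1 : u ∉ V₁ := fun h => hu (Finset.mem_union_left _ h)
    have hu2 : u ∉ V₂ := fun h => hu (Finset.mem_union_right _ h)
    rcases Finset.mem_union.1 hv with hv1 | hv2
    · obtain ⟨f₁', hf₁', hag⟩ := ih1 hv1 hu1
      have hd' : Disjoint (insert u V₁) V₂ := by
        rw [Finset.disjoint_insert_left]; exact ⟨hu2, hd⟩
      have hvn2 : v ∉ V₂ := Finset.disjoint_left.1 hd hv1
      refine ⟨_, (Good.union hd' hf₁' h2).cast (by rw [Finset.insert_union]) ?_ (fun _ => rfl), ?_⟩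
      · intro x y
        have n1 : ¬ A₂ v y := fun h => hvn2 (h2.mem_of_arc v y h).1
        have n2 : ¬ A₂ x v := fun h => hvn2 (h2.mem_of_arc x v h).2
        simp only [twinArc]
        constructor
        · rintro ((h | h | h | ⟨hx, h⟩ | ⟨hy, h⟩) | h)
          · exact Or.inl (Or.inl h)
          · exact Or.inr (Or.inl h)
          · exact Or.inr (Or.inr (Or.inl h))
          · exact Or.inr (Or.inr (Or.inr (Or.inl ⟨hx, Or.inl h⟩)))
          · exact Or.inr (Or.inr (Or.inr (Or.inr ⟨hy, Or.inl h⟩)))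
          · exact Or.inl (Or.inr h)
        · rintro ((h | h) | h | h | ⟨hx, h | h⟩ | ⟨hy, h | h⟩)
          · exact Or.inl (Or.inl h)
          · exact Or.inr h
          · exact Or.inl (Or.inr (Or.inl h))
          · exact Or.inl (Or.inr (Or.inr (Or.inl h)))
          · exact Or.inl (Or.inr (Or.inr (Or.inr (Or.inl ⟨hx, h⟩))))
          · exact absurd h n1
          · exact Or.inl (Or.inr (Or.inr (Or.inr (Or.inr ⟨hy, h⟩))))
          · exact absurd h n2
      · intro x hx
        rcases Finset.mem_insert.1 hx with rfl | hxV
        · have h := hag x (Finset.mem_insert_self x V₁)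
          simp at h
          simp [h, hv1]
        · have hxu : x ≠ u := fun h => hu (h ▸ hxV)
          rcases Finset.mem_union.1 hxV with hx1 | hx2
          · have h := hag x (Finset.mem_insert_of_mem hx1)
            simp [hxu] at h
            simp [hxu, hx1, Finset.mem_insert, h]
          · have hxn1 : x ∉ V₁ := Finset.disjoint_right.1 hd hx2
            simp [hxu, hxn1, Finset.mem_insert]
    · obtain ⟨f₂', hf₂', hag⟩ := ih2 hv2 hu2
      have hd' : Disjoint V₁ (insert u V₂) := by
        rw [Finset.disjoint_insert_right]; exact ⟨hu1, hd⟩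
      have hvn1 : v ∉ V₁ := Finset.disjoint_right.1 hd hv2
      refine ⟨_, (Good.union hd' h1 hf₂').cast (by rw [Finset.union_insert]) ?_ (fun _ => rfl), ?_⟩
      · intro x y
        have n1 : ¬ A₁ v y := fun h => hvn1 (h1.mem_of_arc v y h).1
        have n2 : ¬ A₁ x v := fun h => hvn1 (h1.mem_of_arc x v h).2
        simp only [twinArc]
        constructor
        · rintro (h | (h | h | h | ⟨hx, h⟩ | ⟨hy, h⟩))
          · exact Or.inl (Or.inl h)
          · exact Or.inl (Or.inr h)
          · exact Or.inr (Or.inl h)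
          · exact Or.inr (Or.inr (Or.inl h))
          · exact Or.inr (Or.inr (Or.inr (Or.inl ⟨hx, Or.inr h⟩)))
          · exact Or.inr (Or.inr (Or.inr (Or.inr ⟨hy, Or.inr h⟩)))
        · rintro ((h | h) | h | h | ⟨hx, h | h⟩ | ⟨hy, h | h⟩)
          · exact Or.inl h
          · exact Or.inr (Or.inl h)
          · exact Or.inr (Or.inr (Or.inl h))
          · exact Or.inr (Or.inr (Or.inr (Or.inl h)))
          · exact absurd h n1
          · exact Or.inr (Or.inr (Or.inr (Or.inr (Or.inl ⟨hx, h⟩))))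
          · exact absurd h n2
          · exact Or.inr (Or.inr (Or.inr (Or.inr (Or.inr ⟨hy, h⟩))))
      · intro x hx
        rcases Finset.mem_insert.1 hx with rfl | hxV
        · have h := hag x (Finset.mem_insert_self x V₂)
          simp at h
          simp [h, hu1, hvn1]
        · have hxu : x ≠ u := fun h => hu (h ▸ hxV)
          rcases Finset.mem_union.1 hxV with hx1 | hx2
          · simp [hxu, hx1]
          · have hxn1 : x ∉ V₁ := Finset.disjoint_right.1 hd hx2
            have h := hag x (Finset.mem_insert_of_mem hx2)
            simp [hxu] at h
            simp [hxu, hxn1, h]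
  | addArcs a b hab ha2 hb2 hG ih =>
    rename_i V A f
    intro hv hu
    obtain ⟨f', hf', hag⟩ := ih hv hu
    have hfu : f' u = f v := by
      have := hag u (Finset.mem_insert_self u V); rwa [if_pos rfl] at this
    have hfV : ∀ z ∈ V, f' z = f z := by
      intro z hz
      have hzu : z ≠ u := fun h => hu (h ▸ hz)
      have := hag z (Finset.mem_insert_of_mem hz); rwa [if_neg hzu] at this
    refine ⟨f', (hf'.addArcs a b hab ha2 hb2).cast rfl ?_ (fun _ => rfl), hag⟩
    intro x y
    have key : (x ∈ insert u V ∧ y ∈ insert u V ∧ f' x = a ∧ f' y = b) ↔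
        ((x ∈ V ∧ y ∈ V ∧ f x = a ∧ f y = b) ∨
          (x = u ∧ (v ∈ V ∧ y ∈ V ∧ f v = a ∧ f y = b)) ∨
          (y = u ∧ (x ∈ V ∧ v ∈ V ∧ f x = a ∧ f v = b))) := by
      constructor
      · rintro ⟨hx, hy, hfx, hfy⟩
        rcases Finset.mem_insert.1 hx with rfl | hxV
        · rcases Finset.mem_insert.1 hy with rfl | hyV
          · exact absurd (hfx.symm.trans hfy) hab
          · exact Or.inr (Or.inl ⟨rfl, hv, hyV, by rw [← hfu]; exact hfx, by rw [← hfV y hyV]; exact hfy⟩)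
        · rcases Finset.mem_insert.1 hy with rfl | hyV
          · exact Or.inr (Or.inr ⟨rfl, hxV, hv, by rw [← hfV x hxV]; exact hfx, by rw [← hfu]; exact hfy⟩)
          · exact Or.inl ⟨hxV, hyV, by rw [← hfV x hxV]; exact hfx, by rw [← hfV y hyV]; exact hfy⟩
      · rintro (⟨hxV, hyV, hfx, hfy⟩ | ⟨rfl, -, hyV, hfv, hfy⟩ | ⟨rfl, hxV, -, hfx, hfv⟩)
        · exact ⟨Finset.mem_insert_of_mem hxV, Finset.mem_insert_of_mem hyV,
            by rw [hfV x hxV]; exact hfx, by rw [hfV y hyV]; exact hfy⟩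
        · exact ⟨Finset.mem_insert_self _ _, Finset.mem_insert_of_mem hyV,
            by rw [hfu]; exact hfv, by rw [hfV y hyV]; exact hfy⟩
        · exact ⟨Finset.mem_insert_of_mem hxV, Finset.mem_insert_self _ _,
            by rw [hfV x hxV]; exact hfx, by rw [hfu]; exact hfv⟩
    simp only [twinArc]
    constructor
    · rintro ((hA | hT1 | hT2 | ⟨hxu, hAvy⟩ | ⟨hyu, hAxv⟩) | hQ)
      · exact Or.inl (Or.inl hA)
      · exact Or.inr (Or.inl hT1)
      · exact Or.inr (Or.inr (Or.inl hT2))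
      · exact Or.inr (Or.inr (Or.inr (Or.inl ⟨hxu, Or.inl hAvy⟩)))
      · exact Or.inr (Or.inr (Or.inr (Or.inr ⟨hyu, Or.inl hAxv⟩)))
      · rcases key.1 hQ with hP | ⟨hxu, hP⟩ | ⟨hyu, hP⟩
        · exact Or.inl (Or.inr hP)
        · exact Or.inr (Or.inr (Or.inr (Or.inl ⟨hxu, Or.inr hP⟩)))
        · exact Or.inr (Or.inr (Or.inr (Or.inr ⟨hyu, Or.inr hP⟩)))
    · rintro ((hA | hP) | hT1 | hT2 | ⟨hxu, hAvy | hP⟩ | ⟨hyu, hAxv | hP⟩)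
      · exact Or.inl (Or.inl hA)
      · exact Or.inr (key.2 (Or.inl hP))
      · exact Or.inl (Or.inr (Or.inl hT1))
      · exact Or.inl (Or.inr (Or.inr (Or.inl hT2)))
      · exact Or.inl (Or.inr (Or.inr (Or.inr (Or.inl ⟨hxu, hAvy⟩))))
      · exact Or.inr (key.2 (Or.inr (Or.inl ⟨hxu, hP⟩)))
      · exact Or.inl (Or.inr (Or.inr (Or.inr (Or.inr ⟨hyu, hAxv⟩))))
      · exact Or.inr (key.2 (Or.inr (Or.inr ⟨hyu, hP⟩)))
  | relabel a b ha2 hG ih =>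
    rename_i V A f
    intro hv hu
    obtain ⟨f', hf', hag⟩ := ih hv hu
    refine ⟨_, hf'.relabel a b ha2, ?_⟩
    intro x hx
    rcases Finset.mem_insert.1 hx with rfl | hxV
    · have hfu : f' x = f v := by
        have := hag x (Finset.mem_insert_self x V); rwa [if_pos rfl] at this
      rw [if_pos rfl, hfu]
    · have hxu : x ≠ u := fun h => hu (h ▸ hxV)
      have hfx : f' x = f x := by
        have := hag x hx; rwa [if_neg hxu] at this
      rw [if_neg hxu, hfx]

end Aux2
section Aux3

set_option maxHeartbeats 2000000 in
lemma pend_subst (p u : ℕ) (dir : Bool) {V : Finset ℕ} {A : ℕ → ℕ → Prop} {f : ℕ → Fin 3}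
    (h : Good V A f) :
    p ∈ V → u ∉ V →
    ∃ f', Good (insert u V)
        (fun x y => A x y ∨ (dir = true ∧ x = u ∧ y = p) ∨ (dir = false ∧ x = p ∧ y = u)) f' ∧
      ∀ x ∈ insert u V, f' x = if x = u then 2 else f x := by
  induction h with
  | vertex w a ha =>
    intro hp hu
    have hpw : p = w := Finset.mem_singleton.1 hp
    subst hpw
    have hne : u ≠ p := fun h => hu (h ▸ Finset.mem_singleton_self p)
    refine ⟨fun x => if x = p then a else 2,
      (pend_pair p u hne a ha dir).cast rfl (by intro x y; tauto) (fun _ => rfl), ?_⟩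
    intro x hx
    rcases Finset.mem_insert.1 hx with rfl | hxV
    · simp [hne]
    · have := Finset.mem_singleton.1 hxV
      subst this
      simp [hne.symm]
  | union hd h1 h2 ih1 ih2 =>
    rename_i V₁ V₂ A₁ A₂ f₁ f₂
    intro hp hu
    have hu1 : u ∉ V₁ := fun h => hu (Finset.mem_union_left _ h)
    have hu2 : u ∉ V₂ := fun h => hu (Finset.mem_union_right _ h)
    rcases Finset.mem_union.1 hp with hp1 | hp2
    · obtain ⟨f₁', hf₁', hag⟩ := ih1 hp1 hu1
      have hd' : Disjoint (insert u V₁) V₂ := by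
        rw [Finset.disjoint_insert_left]; exact ⟨hu2, hd⟩
      refine ⟨_, (Good.union hd' hf₁' h2).cast (by rw [Finset.insert_union])
        (by intro x y; tauto) (fun _ => rfl), ?_⟩
      intro x hx
      rcases Finset.mem_insert.1 hx with rfl | hxV
      · have h := hag x (Finset.mem_insert_self x V₁)
        simp at h
        simp [h]
      · have hxu : x ≠ u := fun h => hu (h ▸ hxV)
        rcases Finset.mem_union.1 hxV with hx1 | hx2
        · have h := hag x (Finset.mem_insert_of_mem hx1)
          simp [hxu] at h
          simp [hxu, hx1, Finset.mem_insert, h]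
        · have hxn1 : x ∉ V₁ := Finset.disjoint_right.1 hd hx2
          simp [hxu, hxn1, Finset.mem_insert]
    · obtain ⟨f₂', hf₂', hag⟩ := ih2 hp2 hu2
      have hd' : Disjoint V₁ (insert u V₂) := by
        rw [Finset.disjoint_insert_right]; exact ⟨hu1, hd⟩
      refine ⟨_, (Good.union hd' h1 hf₂').cast (by rw [Finset.union_insert])
        (by intro x y; tauto) (fun _ => rfl), ?_⟩
      intro x hx
      rcases Finset.mem_insert.1 hx with rfl | hxV
      · have h := hag x (Finset.mem_insert_self x V₂)
        simp at h
        simp [h, hu1]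
      · have hxu : x ≠ u := fun h => hu (h ▸ hxV)
        rcases Finset.mem_union.1 hxV with hx1 | hx2
        · simp [hxu, hx1]
        · have hxn1 : x ∉ V₁ := Finset.disjoint_right.1 hd hx2
          have h := hag x (Finset.mem_insert_of_mem hx2)
          simp [hxu] at h
          simp [hxu, hxn1, h]
  | addArcs a b hab ha2 hb2 hG ih =>
    rename_i V A f
    intro hp hu
    obtain ⟨f', hf', hag⟩ := ih hp hu
    have hfu : f' u = 2 := by
      have := hag u (Finset.mem_insert_self u V); rwa [if_pos rfl] at this
    have hfV : ∀ z ∈ V, f' z = f z := by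
      intro z hz
      have hzu : z ≠ u := fun h => hu (h ▸ hz)
      have := hag z (Finset.mem_insert_of_mem hz); rwa [if_neg hzu] at this
    refine ⟨f', (hf'.addArcs a b hab ha2 hb2).cast rfl ?_ (fun _ => rfl), hag⟩
    intro x y
    have key : (x ∈ insert u V ∧ y ∈ insert u V ∧ f' x = a ∧ f' y = b) ↔
        (x ∈ V ∧ y ∈ V ∧ f x = a ∧ f y = b) := by
      constructor
      · rintro ⟨hx, hy, hfx, hfy⟩
        rcases Finset.mem_insert.1 hx with rfl | hxV
        · rw [hfu] at hfx; exact absurd hfx.symm ha2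
        · rcases Finset.mem_insert.1 hy with rfl | hyV
          · rw [hfu] at hfy; exact absurd hfy.symm hb2
          · exact ⟨hxV, hyV, by rw [← hfV x hxV]; exact hfx, by rw [← hfV y hyV]; exact hfy⟩
      · rintro ⟨hxV, hyV, hfx, hfy⟩
        exact ⟨Finset.mem_insert_of_mem hxV, Finset.mem_insert_of_mem hyV,
          by rw [hfV x hxV]; exact hfx, by rw [hfV y hyV]; exact hfy⟩
    constructor
    · rintro ((h | h) | hQ)
      · exact Or.inl (Or.inl h)
      · exact Or.inr h
      · exact Or.inl (Or.inr (key.1 hQ))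
    · rintro ((h | hP) | h)
      · exact Or.inl (Or.inl h)
      · exact Or.inr (key.2 hP)
      · exact Or.inl (Or.inr h)
  | relabel a b ha2 hG ih =>
    rename_i V A f
    intro hp hu
    obtain ⟨f', hf', hag⟩ := ih hp hu
    refine ⟨_, hf'.relabel a b ha2, ?_⟩
    intro x hx
    rcases Finset.mem_insert.1 hx with rfl | hxV
    · have hfu : f' x = 2 := by
        have := hag x (Finset.mem_insert_self x V); rwa [if_pos rfl] at this
      rw [if_pos rfl, hfu, if_neg (Ne.symm ha2)]
    · have hxu : x ≠ u := fun h => hu (h ▸ hxV)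
      have hfx : f' x = f x := by
        have := hag x hx; rwa [if_neg hxu] at this
      rw [if_neg hxu, hfx]

lemma TwinDH.good {V : Finset ℕ} {A : ℕ → ℕ → Prop} (h : TwinDH V A) :
    ∃ f, Good V A f := by
  induction h with
  | single v => exact ⟨fun _ => 0, Good.vertex v 0 (by decide)⟩
  | union hd h1 h2 ih1 ih2 =>
    obtain ⟨f₁, hf₁⟩ := ih1
    obtain ⟨f₂, hf₂⟩ := ih2
    exact ⟨_, Good.union hd hf₁ hf₂⟩
  | twin v u auv avu hv hu hT ih =>
    obtain ⟨f, hf⟩ := ih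
    obtain ⟨f', hf', -⟩ := twin_subst v u auv avu hf hv hu
    exact ⟨f', hf'⟩
  | pendPlus a u ha hu hT ih =>
    obtain ⟨f, hf⟩ := ih
    obtain ⟨f', hf', -⟩ := pend_subst a u true hf ha hu
    exact ⟨f', hf'.cast rfl (by intro x y; simp) (fun _ => rfl)⟩
  | pendMinus a u ha hu hT ih =>
    obtain ⟨f, hf⟩ := ih
    obtain ⟨f', hf', -⟩ := pend_subst a u false hf ha hu
    exact ⟨f', hf'.cast rfl (by intro x y; simp) (fun _ => rfl)⟩

end Aux3

theorem stmt_12 (V : Finset ℕ) (A : ℕ → ℕ → Prop) (h : TwinDH V A) :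
    ∃ f : ℕ → Fin 3, CW 3 V A f := by
  obtain ⟨f, hf⟩ := h.good
  exact ⟨f, hf.toCW⟩
end
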